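/- arXiv:1602.00246 — 8 statements merged into one kernel-verified Lean document; each statement's English description precedes it below -/
import Mathlib

section
/- For every positive integer h, every antichain sequence s_1, …, s_L in ℤ_{≥0}^2 whose degree growth is bounded by the function i ↦ f(1,h)_i satisfies L ≤ h + 1. (This is the paper's computation of the maximal antichain length for m = 2 and n = 1.) -/
/-- The sequence `f(n,h)_k` from the paper: `f(n,h)_0 = 0`, `f(n,h)_1 = f(n,h)_2 = h`,
`f(n,h)_k = f(n,h)_{k-1} + f(n,h)_{k-2}` for `3 ≤ k ≤ n+1`, and
`f(n,h)_k = f(n,h)_{k-1} + f(n,h)_{k-2} - 1` for `k > n+1`. -/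
def fseq (n h : ℕ) : ℕ → ℕ
  | 0 => 0
  | 1 => h
  | 2 => h
  | (k+3) =>
    if k + 3 ≤ n + 1 then fseq n h (k+2) + fseq n h (k+1)
    else fseq n h (k+2) + fseq n h (k+1) - 1

/-- Every antichain sequence `s_1, …, s_L` in `ℤ_{≥0}^2` (componentwise order) whose
degree growth is bounded by `i ↦ f(1,h)_i` satisfies `L ≤ h + 1`. -/
theorem antichain_length_le_of_degree_growth_fseq_one
    (h : ℕ) (hh : 1 ≤ h) (L : ℕ) (s : Fin L → ℕ × ℕ)
    (hanti : ∀ i j : Fin L, i ≠ j → ¬ s i ≤ s j)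
    (hdeg : ∀ i : Fin L, (s i).1 + (s i).2 ≤ fseq 1 h (i.val + 1)) :
    L ≤ h + 1 := by
  rcases Nat.eq_zero_or_pos L with hL | hL
  · omega
  have hnc : ∀ j k : Fin L, j ≠ k → ¬((s j).1 ≤ (s k).1 ∧ (s j).2 ≤ (s k).2) := by
    intro j k hjk
    have := hanti j k hjk
    rwa [Prod.le_def] at this
  set a := (s ⟨0, hL⟩).1 with ha
  set b := (s ⟨0, hL⟩).2 with hb
  have hab : a + b ≤ h := by
    have := hdeg ⟨0, hL⟩
    simpa [fseq] using this
  have cj : ∀ j : Fin L, ((s j).1 = a ∧ (s j).2 = b ∧ j.val = 0) ∨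
      ((s j).1 < a ∧ b < (s j).2) ∨ (a < (s j).1 ∧ (s j).2 < b) := by
    intro j
    by_cases hj : j.val = 0
    · left
      have : j = ⟨0, hL⟩ := Fin.ext hj
      subst this
      exact ⟨rfl, rfl, rfl⟩
    · right
      have h1 := hnc j ⟨0, hL⟩ (by simp [Fin.ext_iff, hj])
      have h2 := hnc ⟨0, hL⟩ j (by simp [Fin.ext_iff]; omega)
      rw [← ha, ← hb] at h1 h2
      omega
  have key : L ≤ a + b + 1 := by
    have hinj : Function.Injective (fun j : Fin L =>
        (⟨if (s j).1 < a then (s j).1 else if (s j).2 < b then a + (s j).2 else a + b, by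
          split_ifs <;> omega⟩ : Fin (a + b + 1))) := by
      intro j k hjk
      by_contra hne
      have hne' : j.val ≠ k.val := fun hv => hne (Fin.ext hv)
      simp only [Fin.mk.injEq] at hjk
      have hj' := hnc j k hne
      have hk' := hnc k j (fun hv => hne hv.symm)
      rcases cj j with h1 | h1 | h1 <;> rcases cj k with h2 | h2 | h2 <;>
        split_ifs at hjk <;> omega
    have := Fintype.card_le_of_injective _ hinj
    simpa using this
  omega
end

section
/- Let n ≥ 1 and h ≥ 1 be integers, and let (F, J) be any (n,h)-jump sequence. Then F_k ≤ f(n,h)_k for all k ≥ 0. Equivalently, among all (n,h)-jump sequences, the one with jump index set {3, 4, …, n+1} (which is exactly the sequence f(n,h)) is pointwise largest. -/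
/-- An `(n,h)`-jump sequence: an integer sequence `F` together with a set `J ⊆ {3, 4, …}`
of jump indices of cardinality at most `n - 1`, with `F 0 = 0`, `F 1 = F 2 = h`,
`F k = F (k-1) + F (k-2)` for `k ∈ J`, and `F k = F (k-1) + F (k-2) - 1` for
`k ≥ 3` with `k ∉ J`. -/
def IsJumpSeq (n h : ℕ) (F : ℕ → ℤ) (J : Finset ℕ) : Prop :=
  (∀ j ∈ J, 3 ≤ j) ∧ J.card ≤ n - 1 ∧
  F 0 = 0 ∧ F 1 = (h : ℤ) ∧ F 2 = (h : ℤ) ∧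
  (∀ k, 3 ≤ k → k ∈ J → F k = F (k - 1) + F (k - 2)) ∧
  (∀ k, 3 ≤ k → k ∉ J → F k = F (k - 1) + F (k - 2) - 1)


lemma fseq_ge (n h : ℕ) (hh : 1 ≤ h) : ∀ k, 1 ≤ k → h ≤ fseq n h k := by
  intro k
  induction k using Nat.strong_induction_on with
  | _ k ih =>
    match k with
    | 0 => omega
    | 1 => intro _; simp [fseq]
    | 2 => intro _; simp [fseq]
    | (m+3) =>
      intro _
      have h1 := ih (m+1) (by omega) (by omega)
      have h2 := ih (m+2) (by omega) (by omega)
      simp only [fseq]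
      split <;> omega

lemma card_inter_succ (J : Finset ℕ) (k : ℕ) :
    (J ∩ Finset.Icc 3 (k+3)).card =
      (J ∩ Finset.Icc 3 (k+2)).card + (if k+3 ∈ J then 1 else 0) := by
  rw [show (k+3) = (k+2)+1 from rfl, ← Finset.insert_Icc_right_eq_Icc_add_one (by omega : 3 ≤ (k+2)+1)]
  by_cases hx : k+2+1 ∈ J
  · rw [Finset.inter_insert_of_mem hx, Finset.card_insert_of_notMem (by
      simp [Finset.mem_Icc]), if_pos hx]
  · rw [Finset.inter_insert_of_notMem hx, if_neg hx]
    simp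

lemma main_ineq (n h : ℕ) (hn : 1 ≤ n) (hh : 1 ≤ h) (F : ℕ → ℤ) (J : Finset ℕ)
    (hJ3 : ∀ j ∈ J, 3 ≤ j) (hJc : J.card ≤ n - 1)
    (h0 : F 0 = 0) (h1 : F 1 = (h : ℤ)) (h2 : F 2 = (h : ℤ))
    (hj : ∀ k, 3 ≤ k → k ∈ J → F k = F (k - 1) + F (k - 2))
    (hnj : ∀ k, 3 ≤ k → k ∉ J → F k = F (k - 1) + F (k - 2) - 1) :
    ∀ k, F k + ((Finset.Icc 3 (min k (n+1))).card : ℤ) ≤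
      (fseq n h k : ℤ) + ((J ∩ Finset.Icc 3 k).card : ℤ) := by
  have hble : ∀ k, (J ∩ Finset.Icc 3 k).card ≤ (Finset.Icc 3 (min k (n+1))).card := by
    intro k
    have e1 : (J ∩ Finset.Icc 3 k).card ≤ J.card := Finset.card_le_card Finset.inter_subset_left
    have e2 : (J ∩ Finset.Icc 3 k).card ≤ (Finset.Icc 3 k).card :=
      Finset.card_le_card Finset.inter_subset_right
    simp only [Nat.card_Icc] at *
    omega
  intro k
  induction k using Nat.strong_induction_on with
  | _ k ih =>
    match k with
    | 0 => simp [fseq, h0]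
    | 1 => simp [fseq, h1, show min 1 (n+1) = 1 by omega]
    | 2 =>
      have e : J ∩ Finset.Icc 3 2 = ∅ := by simp
      have e2 : min 2 (n+1) = 2 := by omega
      rw [e, e2]
      simp [fseq, h2]
    | (m+3) =>
      have ih1 := ih (m+1) (by omega)
      have ih2 := ih (m+2) (by omega)
      have hb1 := hble (m+1)
      have hcard := card_inter_succ J m
      -- value of F at m+3
      have hF : F (m+3) = F (m+2) + F (m+1) - 1 + (if m+3 ∈ J then 1 else 0) := by
        have e1 : m+3-1 = m+2 := rfl
        have e2 : m+3-2 = m+1 := rfl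
        by_cases hm : m+3 ∈ J
        · rw [hj (m+3) (by omega) hm, e1, e2, if_pos hm]; ring
        · rw [hnj (m+3) (by omega) hm, e1, e2, if_neg hm]; ring
      have hpos1 : 1 ≤ fseq n h (m+1) := le_trans hh (fseq_ge n h hh (m+1) (by omega))
      have hfs : (fseq n h (m+3) : ℤ) =
          (fseq n h (m+2) : ℤ) + (fseq n h (m+1) : ℤ) - 1 + (if m+3 ≤ n+1 then 1 else 0) := by
        simp only [fseq]
        split <;> push_cast <;> omega
      -- a increments
      have ha : ((Finset.Icc 3 (min (m+3) (n+1))).card : ℤ) =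
          ((Finset.Icc 3 (min (m+2) (n+1))).card : ℤ) + (if m+3 ≤ n+1 then 1 else 0) := by
        simp only [Nat.card_Icc]
        split <;> push_cast <;> omega
      rw [hF, hfs, ha, hcard]
      push_cast
      split <;> split <;> omega

/-- The sequence `f(n,h)` is the `(n,h)`-jump sequence with jump index set
`{3, …, n+1}`, and every `(n,h)`-jump sequence `(F, J)` satisfies `F_k ≤ f(n,h)_k`
for all `k`; i.e. `f(n,h)` is the pointwise largest `(n,h)`-jump sequence. -/
theorem jumpSeq_le_fseq (n h : ℕ) (hn : 1 ≤ n) (hh : 1 ≤ h) :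
    IsJumpSeq n h (fun k => (fseq n h k : ℤ)) (Finset.Icc 3 (n + 1)) ∧
    ∀ (F : ℕ → ℤ) (J : Finset ℕ), IsJumpSeq n h F J →
      ∀ k, F k ≤ (fseq n h k : ℤ) := by
  constructor
  · refine ⟨fun j hj => (Finset.mem_Icc.mp hj).1, ?_, by simp [fseq], by simp [fseq], by simp [fseq], ?_, ?_⟩
    · rw [Nat.card_Icc]; omega
    · intro k hk hkJ
      obtain ⟨m, rfl⟩ : ∃ m, k = m + 3 := ⟨k - 3, by omega⟩
      rw [Finset.mem_Icc] at hkJ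
      have e1 : m+3-1 = m+2 := rfl
      have e2 : m+3-2 = m+1 := rfl
      rw [e1, e2]
      simp only [fseq, if_pos hkJ.2]
      push_cast
      ring
    · intro k hk hkJ
      obtain ⟨m, rfl⟩ : ∃ m, k = m + 3 := ⟨k - 3, by omega⟩
      rw [Finset.mem_Icc] at hkJ
      have hle : ¬ (m + 3 ≤ n + 1) := by omega
      have hpos : 1 ≤ fseq n h (m+1) := le_trans hh (fseq_ge n h hh (m+1) (by omega))
      have e1 : m+3-1 = m+2 := rfl
      have e2 : m+3-2 = m+1 := rfl
      rw [e1, e2]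
      simp only [fseq, if_neg hle]
      push_cast [Nat.cast_sub (by omega : 1 ≤ fseq n h (m+2) + fseq n h (m+1))]
      ring
  · rintro F J ⟨hJ3, hJc, h0, h1, h2, hj, hnj⟩ k
    have key := main_ineq n h hn hh F J hJ3 hJc h0 h1 h2 hj hnj k
    have hble : (J ∩ Finset.Icc 3 k).card ≤ (Finset.Icc 3 (min k (n+1))).card := by
      have e1 : (J ∩ Finset.Icc 3 k).card ≤ J.card := Finset.card_le_card Finset.inter_subset_left
      have e2 : (J ∩ Finset.Icc 3 k).card ≤ (Finset.Icc 3 k).card :=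
        Finset.card_le_card Finset.inter_subset_right
      simp only [Nat.card_Icc] at *
      omega
    omega
end

section
/- Let n ≥ 1 and h ≥ 1 be integers, let (F, J) be an (n,h)-jump sequence, and let i ∈ J be a jump index with i − 1 ≥ 3 and i − 1 ∉ J. Let (F', J') be the (n,h)-jump sequence with jump index set J' = (J \ {i}) ∪ {i − 1}. Then F_k ≤ F'_k for all k ≥ 0; that is, decreasing a jump index by one yields a sequence that is pointwise not smaller than the original. -/
/-- Decreasing a jump index by one yields a pointwise not smaller `(n,h)`-jump sequence:
if `(F, J)` is an `(n,h)`-jump sequence, `i ∈ J`, `i - 1 ≥ 3`, `i - 1 ∉ J`, and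
`(F', (J \ {i}) ∪ {i-1})` is an `(n,h)`-jump sequence, then `F_k ≤ F'_k` for all `k`. -/
theorem jumpSeq_le_of_decrease_jump_index
    (n h : ℕ) (hn : 1 ≤ n) (hh : 1 ≤ h)
    (F F' : ℕ → ℤ) (J : Finset ℕ) (hF : IsJumpSeq n h F J)
    (i : ℕ) (hiJ : i ∈ J) (hi3 : 3 ≤ i - 1) (hi1 : i - 1 ∉ J)
    (hF' : IsJumpSeq n h F' (insert (i - 1) (J.erase i))) :
    ∀ k, F k ≤ F' k := by
  obtain ⟨hJ3, _, h0, h1, h2, hmem, hnot⟩ := hF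
  obtain ⟨hJ3', _, h0', h1', h2', hmem', hnot'⟩ := hF'
  have hi4 : 4 ≤ i := by omega
  have key : ∀ k, F k ≤ F' k ∧ (k = i - 1 → F k + 1 ≤ F' k) := by
    intro k
    induction k using Nat.strong_induction_on with
    | _ k ih =>
      by_cases hk3 : 3 ≤ k
      · rcases eq_or_ne k (i - 1) with hk | hk
        · have hknJ : k ∉ J := hk ▸ hi1
          have e1 := hnot k hk3 hknJ
          have e2 := hmem' k hk3 (by simp [hk])
          have ih1 := (ih (k - 1) (by omega)).1
          have ih2 := (ih (k - 2) (by omega)).1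
          exact ⟨by linarith, fun _ => by linarith⟩
        · rcases eq_or_ne k i with hki | hki
          · have e1 := hmem k hk3 (hki ▸ hiJ)
            have e2 := hnot' k hk3 (by
              simp only [Finset.mem_insert, Finset.mem_erase]
              push_neg
              exact ⟨hk, fun h => (h hki).elim⟩)
            have ih1 := (ih (k - 1) (by omega)).2 (by omega)
            have ih2 := (ih (k - 2) (by omega)).1
            exact ⟨by linarith, fun h => (hk h).elim⟩
          · by_cases hkJ : k ∈ J
            · have e1 := hmem k hk3 hkJ
              have e2 := hmem' k hk3 (by
                simp only [Finset.mem_insert, Finset.mem_erase]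
                exact Or.inr ⟨hki, hkJ⟩)
              have ih1 := (ih (k - 1) (by omega)).1
              have ih2 := (ih (k - 2) (by omega)).1
              exact ⟨by linarith, fun h => (hk h).elim⟩
            · have e1 := hnot k hk3 hkJ
              have e2 := hnot' k hk3 (by
                simp only [Finset.mem_insert, Finset.mem_erase]
                push_neg
                exact ⟨hk, fun _ => hkJ⟩)
              have ih1 := (ih (k - 1) (by omega)).1
              have ih2 := (ih (k - 2) (by omega)).1
              exact ⟨by linarith, fun h => (hk h).elim⟩
      · interval_cases k <;>
          exact ⟨by simp [h0, h0', h1, h1', h2, h2'], fun h => by omega⟩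
  exact fun k => (key k).1
end

section
/- Let n ≥ 1 and h ≥ 1 be integers, and define b_1 = h + 1 and b_{k+1} = f(n,h)_{b_k + 1} + b_k + 1 for k ≥ 1. Then every antichain sequence s_1, …, s_L in ℤ_{≥0}^2 × {1, …, n} whose degree growth is bounded by the function i ↦ f(n,h)_i satisfies L ≤ b_n. -/
/-- The sequence `b_k` (indexed from 1): `b_1 = h + 1`, `b_{k+1} = f(n,h)_{b_k + 1} + b_k + 1`. -/
def bseq (n h : ℕ) : ℕ → ℕ
  | 0 => 0
  | 1 => h + 1
  | (k+2) => fseq n h (bseq n h (k+1) + 1) + bseq n h (k+1) + 1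

lemma fseq_three (n h k : ℕ) : fseq n h (k+3) =
    if k + 3 ≤ n + 1 then fseq n h (k+2) + fseq n h (k+1)
    else fseq n h (k+2) + fseq n h (k+1) - 1 := rfl

lemma fseq_one_le (n h : ℕ) (hh : 1 ≤ h) : ∀ k, 1 ≤ k → 1 ≤ fseq n h k
  | 0, hk => absurd hk (by omega)
  | 1, _ => hh
  | 2, _ => hh
  | (k+3), _ => by
    have h1 := fseq_one_le n h hh (k+1) (by omega)
    have h2 := fseq_one_le n h hh (k+2) (by omega)
    rw [fseq_three]
    split <;> omega

lemma fseq_mono (n h : ℕ) (hh : 1 ≤ h) : Monotone (fseq n h) := by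
  apply monotone_nat_of_le_succ
  intro k
  match k with
  | 0 => exact Nat.zero_le _
  | 1 => exact le_refl _
  | (k+2) =>
    have h1 := fseq_one_le n h hh (k+1) (by omega)
    rw [fseq_three]
    split <;> omega

lemma bseq_succ (n h k : ℕ) :
    bseq n h (k+1) = fseq n h (bseq n h k + 1) + bseq n h k + 1 := by
  match k with
  | 0 => simp [bseq, fseq]
  | (k+1) => rfl

lemma bseq_mono (n h : ℕ) : Monotone (bseq n h) := by
  apply monotone_nat_of_le_succ
  intro k
  rw [bseq_succ]
  omega

/-- Every antichain sequence `s_1, …, s_L` in `ℤ_{≥0}^2 × {1, …, n}` (elements with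
different last components are incomparable; on equal last components the order is
componentwise) whose degree growth is bounded by `i ↦ f(n,h)_i` satisfies `L ≤ b_n`. -/
theorem antichain_length_le_bseq (n h : ℕ) (hn : 1 ≤ n) (hh : 1 ≤ h)
    (L : ℕ) (s : Fin L → (ℕ × ℕ) × Fin n)
    (hanti : ∀ i j : Fin L, i ≠ j → ¬ ((s i).2 = (s j).2 ∧ (s i).1 ≤ (s j).1))
    (hdeg : ∀ i : Fin L, (s i).1.1 + (s i).1.2 ≤ fseq n h (i.val + 1)) :
    L ≤ bseq n h n := by
  classical
  -- `P i0` : the set of positions with the same color as `i0`.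
  set P : Fin L → Finset (Fin L) :=
    fun i0 => Finset.univ.filter (fun i => (s i).2 = (s i0).2) with hP
  have hPmem : ∀ i0 i : Fin L, i ∈ P i0 ↔ (s i).2 = (s i0).2 := by
    intro i0 i; simp [hP]
  -- per-color cardinality bound
  have hPcard : ∀ i0 : Fin L, (P i0).card ≤ (s i0).1.1 + (s i0).1.2 + 1 := by
    intro i0
    have hmem : i0 ∈ P i0 := (hPmem i0 i0).mpr rfl
    have hcard := Finset.card_erase_add_one hmem
    -- incomparability facts
    have hinc : ∀ i ∈ (P i0).erase i0,
        (s i).1.1 < (s i0).1.1 ∨ (s i).1.2 < (s i0).1.2 := by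
      intro i hi
      obtain ⟨hne, hiP⟩ := Finset.mem_erase.mp hi
      have hcol : (s i).2 = (s i0).2 := (hPmem i0 i).mp hiP
      have h1 : ¬ (s i0).1 ≤ (s i).1 := fun hle => hanti i0 i (Ne.symm hne) ⟨hcol.symm, hle⟩
      rw [Prod.le_def, not_and_or, not_le, not_le] at h1
      exact h1
    have key : ((P i0).erase i0).card ≤ (s i0).1.1 + (s i0).1.2 := by
      have hle := Finset.card_le_card_of_injOn
        (f := fun i => if (s i).1.1 < (s i0).1.1 then Sum.inl (s i).1.1
                        else Sum.inr (s i).1.2)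
        (s := (P i0).erase i0)
        (t := (Finset.range (s i0).1.1).disjSum (Finset.range (s i0).1.2))
        (by
          intro i hi
          have := hinc i hi
          by_cases hcase : (s i).1.1 < (s i0).1.1
          · simp [hcase, Finset.inl_mem_disjSum]
          · have : (s i).1.2 < (s i0).1.2 := by omega
            simp [hcase, Finset.inr_mem_disjSum, this])
        (by
          intro i hi j hj heq
          by_contra hne
          have hci : (s i).2 = (s i0).2 := (hPmem i0 i).mp (Finset.mem_erase.mp hi).2
          have hcj : (s j).2 = (s i0).2 := (hPmem i0 j).mp (Finset.mem_erase.mp hj).2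
          have hij : ¬ (s i).1 ≤ (s j).1 := fun hle => hanti i j hne ⟨hci.trans hcj.symm, hle⟩
          have hji : ¬ (s j).1 ≤ (s i).1 :=
            fun hle => hanti j i (Ne.symm hne) ⟨hcj.trans hci.symm, hle⟩
          rw [Prod.le_def, not_and_or, not_le, not_le] at hij hji
          by_cases h1 : (s i).1.1 < (s i0).1.1 <;>
            by_cases h2 : (s j).1.1 < (s i0).1.1 <;>
              simp [h1, h2] at heq <;> omega)
      simpa using hle
    omega
  -- first occurrence of the color of `i`
  have hPne : ∀ i : Fin L, (P i).Nonempty := fun i => ⟨i, (hPmem i i).mpr rfl⟩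
  set first : Fin L → Fin L := fun i => (P i).min' (hPne i) with hfirstdef
  have hfc : ∀ i, (s (first i)).2 = (s i).2 := by
    intro i
    exact (hPmem i (first i)).mp (Finset.min'_mem _ _)
  have hfle : ∀ i, first i ≤ i := fun i => Finset.min'_le _ _ ((hPmem i i).mpr rfl)
  have hfeq : ∀ i j, (s i).2 = (s j).2 → first i = first j := by
    intro i j hc
    apply le_antisymm
    · exact Finset.min'_le _ _ ((hPmem i (first j)).mpr ((hfc j).trans hc.symm))
    · exact Finset.min'_le _ _ ((hPmem j (first i)).mpr ((hfc i).trans hc))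
  set M : Finset (Fin L) := Finset.univ.image first with hM
  have hMfix : ∀ x ∈ M, first x = x := by
    intro x hx
    obtain ⟨i, _, hxi⟩ := Finset.mem_image.mp hx
    rw [← hxi]
    exact hfeq (first i) i (hfc i)
  have hMinj : ∀ x ∈ M, ∀ y ∈ M, (s x).2 = (s y).2 → x = y := by
    intro x hx y hy hc
    rw [← hMfix x hx, ← hMfix y hy]
    exact hfeq x y hc
  set m : ℕ := M.card with hm
  have hmn : m ≤ n := by
    have := Finset.card_le_card_of_injOn (f := fun i => (s i).2)
      (s := M) (t := (Finset.univ : Finset (Fin n)))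
      (fun _ _ => Finset.mem_univ _) (fun x hx y hy hc => hMinj x hx y hy hc)
    simpa using this
  set e : Fin m ≃o {x // x ∈ M} := M.orderIsoOfFin rfl with he
  -- every position's first occurrence is in M
  have hfM : ∀ i : Fin L, first i ∈ M := fun i => Finset.mem_image_of_mem first (Finset.mem_univ i)
  -- membership in the color class of a first occurrence
  have hiP : ∀ i : Fin L, i ∈ P ((e (e.symm ⟨first i, hfM i⟩) : Fin L)) := by
    intro i
    rw [hPmem]
    have : ((e (e.symm ⟨first i, hfM i⟩) : Fin L)) = first i := by
      rw [OrderIso.apply_symm_apply]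
    rw [this]
    exact (hfc i).symm
  -- the key induction
  have key : ∀ j, j ≤ m →
      ∑ r ∈ Finset.univ.filter (fun r : Fin m => (r : ℕ) < j), (P (e r : Fin L)).card
        ≤ bseq n h j := by
    intro j
    induction j with
    | zero => intro _; simp [bseq]
    | succ j ih =>
      intro hj
      have hj' : j < m := by omega
      have ihj := ih (by omega)
      set rj : Fin m := ⟨j, hj'⟩ with hrj
      have hsplit : Finset.univ.filter (fun r : Fin m => (r:ℕ) < j + 1)
          = insert rj (Finset.univ.filter (fun r : Fin m => (r:ℕ) < j)) := by
        ext r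
        simp only [Finset.mem_filter, Finset.mem_univ, true_and, Finset.mem_insert,
          hrj, Fin.ext_iff]
        omega
      rw [hsplit, Finset.sum_insert (by simp [hrj])]
      -- bound on the position of the (j+1)-st first occurrence
      have hpos : ((e rj : Fin L) : ℕ)
          ≤ ∑ r ∈ Finset.univ.filter (fun r : Fin m => (r:ℕ) < j), (P (e r : Fin L)).card := by
        have hsub : Finset.Iio (e rj : Fin L)
            ⊆ (Finset.univ.filter (fun r : Fin m => (r:ℕ) < j)).biUnion
                (fun r => P (e r : Fin L)) := by
          intro i hi
          have hi' : i < (e rj : Fin L) := Finset.mem_Iio.mp hi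
          set r : Fin m := e.symm ⟨first i, hfM i⟩ with hr
          have her : ((e r : Fin L)) = first i := by
            rw [hr, OrderIso.apply_symm_apply]
          have hrlt : (r : ℕ) < j := by
            have h1 : (e r : Fin L) < (e rj : Fin L) :=
              lt_of_le_of_lt (her ▸ hfle i) hi'
            have h2 : e r < e rj := Subtype.coe_lt_coe.mp h1
            have h3 : r < rj := e.lt_iff_lt.mp h2
            simpa [hrj, Fin.lt_iff_val_lt_val] using h3
          exact Finset.mem_biUnion.mpr ⟨r, by simp [hrlt], hiP i⟩
        calc ((e rj : Fin L) : ℕ) = (Finset.Iio (e rj : Fin L)).card := (Fin.card_Iio _).symm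
          _ ≤ ((Finset.univ.filter (fun r : Fin m => (r:ℕ) < j)).biUnion
                (fun r => P (e r : Fin L))).card := Finset.card_le_card hsub
          _ ≤ _ := Finset.card_biUnion_le
      have hNrj : (P (e rj : Fin L)).card ≤ fseq n h (((e rj : Fin L) : ℕ) + 1) + 1 := by
        have h1 := hPcard (e rj : Fin L)
        have h2 := hdeg (e rj : Fin L)
        omega
      have hf : fseq n h (((e rj : Fin L) : ℕ) + 1) ≤ fseq n h (bseq n h j + 1) :=
        fseq_mono n h hh (by omega)
      have hb := bseq_succ n h j
      omega
  -- all positions are covered by the color classes of the first occurrences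
  have hU : (Finset.univ : Finset (Fin L))
      = (Finset.univ : Finset (Fin m)).biUnion (fun r => P (e r : Fin L)) := by
    ext i
    simp only [Finset.mem_univ, true_iff, Finset.mem_biUnion]
    exact ⟨e.symm ⟨first i, hfM i⟩, trivial, hiP i⟩
  have hdisj : ∀ r ∈ (Finset.univ : Finset (Fin m)), ∀ r' ∈ (Finset.univ : Finset (Fin m)),
      r ≠ r' → Disjoint (P (e r : Fin L)) (P (e r' : Fin L)) := by
    intro r _ r' _ hne
    rw [Finset.disjoint_left]
    intro i hir hir'
    have h1 : (s i).2 = (s (e r : Fin L)).2 := (hPmem _ i).mp hir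
    have h2 : (s i).2 = (s (e r' : Fin L)).2 := (hPmem _ i).mp hir'
    have h3 : ((e r : Fin L)) = ((e r' : Fin L)) :=
      hMinj _ (e r).2 _ (e r').2 (h1.symm.trans h2)
    exact hne (e.injective (Subtype.ext h3))
  have hLsum : L = ∑ r ∈ (Finset.univ : Finset (Fin m)), (P (e r : Fin L)).card := by
    rw [← Finset.card_biUnion hdisj, ← hU, Finset.card_univ, Fintype.card_fin]
  have hfilter : (Finset.univ : Finset (Fin m))
      = Finset.univ.filter (fun r : Fin m => (r : ℕ) < m) := by
    ext r; simp [r.isLt]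
  have hkey := key m le_rfl
  rw [← hfilter] at hkey
  calc L = _ := hLsum
    _ ≤ bseq n h m := hkey
    _ ≤ bseq n h n := bseq_mono n h hmn
end

section
/- Let h ≥ 1 be an integer, and define c_0 = 1 and c_i = c_{i−1} + 1 + h·Fib_{c_{i−1}+1} − (h − i) for 1 ≤ i ≤ h. Then the maximal length of an antichain sequence in ℤ_{≥0}^3 whose degree growth is bounded by the function i ↦ h·Fib_i is equal to c_h. -/
/-- The sequence `c_i`: `c_0 = 1`, `c_i = c_{i-1} + 1 + h·Fib_{c_{i-1}+1} − (h − i)`. -/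
def cseq (h : ℕ) : ℕ → ℕ
  | 0 => 1
  | (i+1) => cseq h i + 1 + h * Nat.fib (cseq h i + 1) - (h - (i + 1))



/-- control function, 1-indexed position -/
def ACgam (h q : ℕ) : ℕ := h * Nat.fib q

/-- tail value function: `ACT h k r` = max remaining length with `k` levels left,
current 1-indexed position `r` already used. -/
def ACT (h : ℕ) : ℕ → ℕ → ℕ
  | 0, _ => 0
  | (k+1), r => 1 + (ACgam h (r+1) - k) + ACT h k (r + 1 + (ACgam h (r+1) - k))

lemma ACgam_mono (h : ℕ) {q q' : ℕ} (hq : q ≤ q') : ACgam h q ≤ ACgam h q' :=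
  Nat.mul_le_mul_left h (Nat.fib_mono hq)

lemma ACgam_ge (h : ℕ) {q : ℕ} (hq : 1 ≤ q) : h ≤ ACgam h q := by
  have : 1 ≤ Nat.fib q := Nat.fib_pos.2 hq
  calc h = h * 1 := (mul_one h).symm
    _ ≤ h * Nat.fib q := Nat.mul_le_mul_left h this

lemma ACgam_step (h : ℕ) {r : ℕ} (hr : 1 ≤ r) :
    ACgam h (r+1) + h ≤ ACgam h (r+2) := by
  have h1 : Nat.fib (r+2) = Nat.fib r + Nat.fib (r+1) := Nat.fib_add_two
  have h2 : 1 ≤ Nat.fib r := Nat.fib_pos.2 hr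
  unfold ACgam
  calc h * Nat.fib (r+1) + h = h * (Nat.fib (r+1) + 1) := by ring
    _ ≤ h * (Nat.fib (r+1) + Nat.fib r) := by
        exact Nat.mul_le_mul_left h (by omega)
    _ = h * Nat.fib (r+2) := by rw [h1]; ring

lemma cseq_one_le (h : ℕ) (hh : 1 ≤ h) : ∀ i, 1 ≤ cseq h i := by
  intro i
  induction i with
  | zero => simp [cseq]
  | succ i ih =>
    have hg : h ≤ h * Nat.fib (cseq h i + 1) := ACgam_ge h (by omega)
    show 1 ≤ cseq h i + 1 + h * Nat.fib (cseq h i + 1) - (h - (i + 1))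
    omega

lemma ACT_mono_pos (h k : ℕ) : ∀ {r r' : ℕ}, r ≤ r' → ACT h k r ≤ ACT h k r' := by
  induction k with
  | zero => intro r r' _; simp [ACT]
  | succ k ih =>
    intro r r' hr
    show 1 + (ACgam h (r+1) - k) + ACT h k (r + 1 + (ACgam h (r+1) - k)) ≤
      1 + (ACgam h (r'+1) - k) + ACT h k (r' + 1 + (ACgam h (r'+1) - k))
    have hg : ACgam h (r+1) ≤ ACgam h (r'+1) := ACgam_mono h (by omega)
    have h1 : ACgam h (r+1) - k ≤ ACgam h (r'+1) - k := by omega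
    have h2 : ACT h k (r + 1 + (ACgam h (r+1) - k)) ≤
        ACT h k (r' + 1 + (ACgam h (r'+1) - k)) := ih (by omega)
    omega

lemma ACT_mono_k (h : ℕ) {k k' : ℕ} (hk : k ≤ k') : ∀ r, ACT h k r ≤ ACT h k' r := by
  induction k' with
  | zero => intro r; have hk0 : k = 0 := Nat.le_zero.1 hk; subst hk0; exact le_refl _
  | succ k' ih =>
    intro r
    rcases Nat.lt_or_ge k (k'+1) with hlt | hge
    · have : ACT h k r ≤ ACT h k' r := by
        rcases Nat.eq_or_lt_of_le (Nat.lt_succ_iff.1 hlt) with he | hl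
        · exact he ▸ le_refl _
        · exact ih (by omega) r
      refine le_trans this ?_
      show ACT h k' r ≤ 1 + (ACgam h (r+1) - k') + ACT h k' (r + 1 + (ACgam h (r+1) - k'))
      have := ACT_mono_pos h k' (show r ≤ r + 1 + (ACgam h (r+1) - k') by omega)
      omega
    · have : k = k' + 1 := by omega
      exact this ▸ le_refl _

/-- the key "skipping is not better" inequality -/
lemma ACstar (h : ℕ) (hh : 1 ≤ h) :
    ∀ d k' r, k' + d + 1 ≤ h → 1 ≤ r →
      1 + (d+1) * (ACgam h (r+1) - k') +
        ACT h k' (r + 1 + (d+1) * (ACgam h (r+1) - k')) ≤ ACT h (k'+d+1) r := by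
  intro d
  induction d with
  | zero =>
    intro k' r hk hr
    show 1 + 1 * (ACgam h (r+1) - k') + ACT h k' (r + 1 + 1 * (ACgam h (r+1) - k')) ≤
      1 + (ACgam h (r+1) - k') + ACT h k' (r + 1 + (ACgam h (r+1) - k'))
    simp [one_mul]
  | succ d ih =>
    intro k' r hk hr
    -- abbreviations
    set A := ACgam h (r+1) with hA
    have hAh : h ≤ A := ACgam_ge h (by omega)
    have hkA : k' + d + 2 ≤ A := by omega
    -- RHS unfold : ACT h (k'+d+2) r
    have hrhs : ACT h (k'+(d+1)+1) r =
        1 + (A - (k'+d+1)) + ACT h (k'+d+1) (r + 1 + (A - (k'+d+1))) := by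
      show ACT h ((k'+d+1)+1) r = _
      rfl
    set r1 := r + 1 + (A - (k'+d+1)) with hr1
    set A1 := ACgam h (r1+1) with hA1
    have hr1r : r + 1 ≤ r1 := by omega
    have hA1A : A + h ≤ A1 := by
      have h1 : ACgam h (r+2) ≤ A1 := ACgam_mono h (by omega)
      have h2 := ACgam_step h hr
      omega
    -- apply IH at r1
    have hih := ih k' r1 (by omega) (by omega)
    rw [← hA1] at hih
    -- arith: scalar and position comparisons
    have hsc : (d+1+1) * (A - k') + 1 ≤ 1 + (A - (k'+d+1)) + (1 + (d+1) * (A1 - k')) := by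
      have e1 : (d+1) * (A1 - k') ≥ (d+1) * (A - k') + (d+1) * h := by
        have : A - k' + h ≤ A1 - k' := by omega
        calc (d+1) * (A - k') + (d+1) * h = (d+1) * (A - k' + h) := by ring
          _ ≤ (d+1) * (A1 - k') := Nat.mul_le_mul_left _ this
      have e2 : (d+1) * h ≥ (d+1) * 1 := Nat.mul_le_mul_left _ hh
      have e3 : (d+1+1) * (A - k') = (d+1) * (A - k') + (A - k') := by ring
      omega
    have hpos : r + 1 + (d+1+1) * (A - k') ≤ r1 + 1 + (d+1) * (A1 - k') := by
      have e1 : (d+1) * (A1 - k') ≥ (d+1) * (A - k') + (d+1) * h := by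
        have : A - k' + h ≤ A1 - k' := by omega
        calc (d+1) * (A - k') + (d+1) * h = (d+1) * (A - k' + h) := by ring
          _ ≤ (d+1) * (A1 - k') := Nat.mul_le_mul_left _ this
      have e2 : (d+1) * h ≥ (d+1) * 1 := Nat.mul_le_mul_left _ hh
      have e3 : (d+1+1) * (A - k') = (d+1) * (A - k') + (A - k') := by ring
      omega
    have hmon : ACT h k' (r + 1 + (d+1+1) * (A - k')) ≤
        ACT h k' (r1 + 1 + (d+1) * (A1 - k')) := ACT_mono_pos h k' hpos
    rw [hrhs]
    omega

/-- link between cseq and ACT -/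
lemma cseq_eq_ACT (h : ℕ) (hh : 1 ≤ h) : cseq h h = 1 + ACT h h 1 := by
  suffices H : ∀ j, ∀ i, i + j = h → cseq h h = cseq h i + ACT h j (cseq h i) by
    have := H h 0 (by omega)
    simpa [cseq] using this
  intro j
  induction j with
  | zero =>
    intro i hi
    have : i = h := by omega
    subst this
    simp [ACT]
  | succ j ih =>
    intro i hi
    have hstep : cseq h i + ACT h (j+1) (cseq h i) =
        cseq h (i+1) + ACT h j (cseq h (i+1)) := by
      have hc1 : 1 ≤ cseq h i := cseq_one_le h hh i
      have hg : h ≤ h * Nat.fib (cseq h i + 1) := ACgam_ge h (by omega)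
      have hcs : cseq h (i+1) = cseq h i + 1 + (h * Nat.fib (cseq h i + 1) - (h - (i+1))) := by
        show cseq h i + 1 + h * Nat.fib (cseq h i + 1) - (h - (i + 1)) = _
        omega
      have hgam : ACgam h (cseq h i + 1) = h * Nat.fib (cseq h i + 1) := rfl
      have hsub : ACgam h (cseq h i + 1) - j = h * Nat.fib (cseq h i + 1) - (h - (i+1)) := by
        rw [hgam]; omega
      show cseq h i + (1 + (ACgam h (cseq h i + 1) - j) +
          ACT h j (cseq h i + 1 + (ACgam h (cseq h i + 1) - j))) = _
      rw [hsub]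
      rw [hcs]
      set X := h * Nat.fib (cseq h i + 1) - (h - (i+1)) with hX
      set T := ACT h j (cseq h i + 1 + X) with hT
      ring
    rw [hstep]
    exact ih (i+1) (by omega)

/-- unrolling of the step system -/
lemma ACrun (h : ℕ) (hh : 1 ≤ h) (L : ℕ) (K b : ℕ → ℕ)
    (hK0 : K 0 ≤ h) (hb0 : b 0 = 0)
    (hstep : ∀ t, t + 1 < L →
      (K (t+1) = K t ∧ b (t+1) ≤ b t - 1 ∧ 1 ≤ b t) ∨
      (K (t+1) < K t ∧ b (t+1) ≤ b t + (K t - K (t+1)) * (ACgam h (t+2) - K (t+1)))) :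
    L ≤ cseq h h := by
  have Kle : ∀ t, t < L → K t ≤ h := by
    intro t
    induction t with
    | zero => intro _; exact hK0
    | succ t ih =>
      intro ht
      have h1 : t < L := by omega
      rcases hstep t ht with ⟨he, _⟩ | ⟨hl, _⟩
      · exact he ▸ ih h1
      · exact le_trans (le_of_lt hl) (ih h1)
  have main : ∀ n t, t < L → L - (t+1) ≤ n →
      L - (t+1) ≤ b t + ACT h (K t) (t + 1 + b t) := by
    intro n
    induction n with
    | zero => intro t _ hn; omega
    | succ n ih =>
      intro t htL hn
      rcases Nat.eq_zero_or_pos (L - (t+1)) with hz | hp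
      · omega
      have ht1 : t + 1 < L := by omega
      have hIH := ih (t+1) ht1 (by omega)
      rcases hstep t ht1 with ⟨hKe, hbe, hb1⟩ | ⟨hKl, hbl⟩
      · -- within-level step
        have hmon : ACT h (K (t+1)) (t+1+1+b (t+1)) ≤ ACT h (K t) (t+1+b t) := by
          rw [hKe]
          exact ACT_mono_pos h (K t) (by omega)
        omega
      · -- level drop
        set k := K t with hk
        set k' := K (t+1) with hk'
        set r := t + 1 + b t with hr
        have hkh : k ≤ h := Kle t (by omega)
        have hgm : ACgam h (t+2) ≤ ACgam h (r+1) := ACgam_mono h (by omega)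
        have hQ : (k - k') * (ACgam h (t+2) - k') ≤ (k - k') * (ACgam h (r+1) - k') :=
          Nat.mul_le_mul_left _ (by omega)
        have hpos : ACT h k' (t+1+1+b (t+1)) ≤
            ACT h k' (r + 1 + (k - k') * (ACgam h (r+1) - k')) :=
          ACT_mono_pos h k' (by omega)
        have hstar := ACstar h hh (k - k' - 1) k' r (by omega) (by omega)
        have he1 : k' + (k - k' - 1) + 1 = k := by omega
        have he2 : (k - k' - 1 + 1) = k - k' := by omega
        rw [he1, he2] at hstar
        omega
  rcases Nat.eq_zero_or_pos L with hL0 | hLp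
  · have := cseq_one_le h hh h
    omega
  have h0 := main (L - 1) 0 (by omega) (by omega)
  have hfin : ACT h (K 0) (0 + 1 + b 0) ≤ ACT h h 1 := by
    rw [hb0]
    exact ACT_mono_k h hK0 1
  have := cseq_eq_ACT h hh
  omega

/-! ### Geometry part -/

section ACgeo

variable {L : ℕ}

/-- the sequence, extended to all of ℕ -/
def ACsE (L : ℕ) (s : Fin L → (Fin 3 → ℕ)) : ℕ → (Fin 3 → ℕ) :=
  fun i => if hi : i < L then s ⟨i, hi⟩ else fun _ => 0

/-- coordinatewise min of the first `t+1` elements -/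
def ACm (L : ℕ) (s : Fin L → (Fin 3 → ℕ)) : ℕ → Fin 3 → ℕ
  | 0 => ACsE L s 0
  | (t+1) => fun j => min (ACm L s t j) (ACsE L s (t+1) j)

/-- sum of coordinate minima -/
def ACK (L : ℕ) (s : Fin L → (Fin 3 → ℕ)) (t : ℕ) : ℕ := ∑ j, ACm L s t j

def ACdeg (x : Fin 3 → ℕ) : ℕ := ∑ j, x j

/-- the "level-preserving free region" after the first `t+1` elements -/
def ACG (L : ℕ) (s : Fin L → (Fin 3 → ℕ)) (t : ℕ) : Set (Fin 3 → ℕ) :=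
  {x | (∀ j, ACm L s t j ≤ x j) ∧ ∀ i ≤ t, ¬ x ≤ ACsE L s i ∧ ¬ ACsE L s i ≤ x}

/-- "every antichain in the free region has size at most n" -/
def ACBnd (L : ℕ) (s : Fin L → (Fin 3 → ℕ)) (t n : ℕ) : Prop :=
  ∀ F : Finset (Fin 3 → ℕ), (∀ x ∈ F, x ∈ ACG L s t) →
    (∀ x ∈ F, ∀ y ∈ F, x ≠ y → ¬ x ≤ y) → F.card ≤ n

variable {s : Fin L → (Fin 3 → ℕ)}

lemma ACBnd_mono {t n n' : ℕ} (hB : ACBnd L s t n) (hn : n ≤ n') : ACBnd L s t n' :=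
  fun F h1 h2 => le_trans (hB F h1 h2) hn

lemma ACBnd_zero : ACBnd L s 0 0 := by
  intro F hG hAC
  have : F = ∅ := by
    rcases Finset.eq_empty_or_nonempty F with he | ⟨x, hx⟩
    · exact he
    · exfalso
      have h1 := (hG x hx).1
      have h2 := ((hG x hx).2 0 (le_refl 0)).2
      exact h2 (by intro j; exact h1 j)
  simp [this]

lemma ACm_succ_le {t : ℕ} (j : Fin 3) : ACm L s (t+1) j ≤ ACm L s t j :=
  min_le_left _ _

lemma ACK_succ_le {t : ℕ} : ACK L s (t+1) ≤ ACK L s t :=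
  Finset.sum_le_sum (fun j _ => ACm_succ_le j)

lemma ACK_eq_coords {t : ℕ} (hK : ACK L s (t+1) = ACK L s t) (j : Fin 3) :
    ACm L s (t+1) j = ACm L s t j := by
  by_contra hne
  have hlt : ACm L s (t+1) j < ACm L s t j :=
    lt_of_le_of_ne (ACm_succ_le j) hne
  have : ACK L s (t+1) < ACK L s t :=
    Finset.sum_lt_sum (fun i _ => ACm_succ_le i) ⟨j, Finset.mem_univ j, hlt⟩
  omega

lemma ACantichain_incomp (hA : ∀ i j : Fin L, i ≠ j → ¬ s i ≤ s j)
    {i i' : ℕ} (hi : i < L) (hi' : i' < L) (hne : i ≠ i') :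
    ¬ ACsE L s i ≤ ACsE L s i' := by
  have e1 : ACsE L s i = s ⟨i, hi⟩ := dif_pos hi
  have e2 : ACsE L s i' = s ⟨i', hi'⟩ := dif_pos hi'
  rw [e1, e2]
  exact hA _ _ (by simp [Fin.ext_iff]; omega)

/-- within-level step -/
lemma ACwithin (hA : ∀ i j : Fin L, i ≠ j → ¬ s i ≤ s j)
    {t n : ℕ} (ht : t + 1 < L) (hK : ACK L s (t+1) = ACK L s t)
    (hB : ACBnd L s t n) : 1 ≤ n ∧ ACBnd L s (t+1) (n - 1) := by
  set u := ACsE L s (t+1) with hu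
  have hmins : ∀ j, ACm L s t j ≤ u j := by
    intro j
    have := ACK_eq_coords hK j
    have h2 : ACm L s (t+1) j = min (ACm L s t j) (u j) := rfl
    rw [h2] at this
    rcases min_cases (ACm L s t j) (u j) with ⟨h3, h4⟩ | ⟨h3, h4⟩
    · exact h4
    · omega
  have huG : u ∈ ACG L s t := by
    constructor
    · exact hmins
    · intro i hi
      constructor
      · exact ACantichain_incomp hA ht (by omega) (by omega)
      · exact ACantichain_incomp hA (by omega) ht (by omega)
  have h1n : 1 ≤ n := by
    have := hB {u} (by intro x hx; simp at hx; subst hx; exact huG)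
      (by intro x hx y hy hxy; simp at hx hy; subst hx; subst hy; exact absurd rfl hxy)
    simpa using this
  refine ⟨h1n, ?_⟩
  intro F hG hAC
  have huF : u ∉ F := by
    intro huF
    exact ((hG u huF).2 (t+1) (le_refl _)).2 (le_refl u)
  have hcard : (insert u F).card = F.card + 1 := Finset.card_insert_of_notMem huF
  have hle : (insert u F).card ≤ n := by
    apply hB
    · intro x hx
      rcases Finset.mem_insert.1 hx with he | hxF
      · exact he ▸ huG
      · have h1 := hG x hxF
        constructor
        · intro j
          have := ACK_eq_coords hK j
          rw [← this]; exact h1.1 j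
        · intro i hi
          exact h1.2 i (by omega)
    · intro x hx y hy hxy
      rcases Finset.mem_insert.1 hx with hex | hxF <;>
        rcases Finset.mem_insert.1 hy with hey | hyF
      · exfalso; exact hxy (hex.trans hey.symm)
      · subst hex
        exact ((hG y hyF).2 (t+1) (le_refl _)).2
      · subst hey
        exact ((hG x hxF).2 (t+1) (le_refl _)).1
      · exact hAC x hxF y hyF hxy
  omega

end ACgeo


section ACgeo2

variable {L : ℕ} {s : Fin L → (Fin 3 → ℕ)}

lemma ACfin3_cover : ∀ c j : Fin 3, c = j ∨ c = j + 1 ∨ c = j + 2 := by decide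

lemma ACfin3_sum (f : Fin 3 → ℕ) (j : Fin 3) : f (j+1) + f (j+2) ≤ ∑ c, f c := by
  fin_cases j <;> simp [Fin.sum_univ_three] <;> omega

lemma ACfin3_enum : ∀ j : Fin 3, j = 0 ∨ j = 1 ∨ j = 2 := by decide

lemma ACtwo_eq_comparable {x y : Fin 3 → ℕ} {j : Fin 3} (h1 : x j = y j)
    (h2 : x (j+1) = y (j+1)) : x ≤ y ∨ y ≤ x := by
  rcases le_total (x (j+2)) (y (j+2)) with h3 | h3
  · left
    intro c
    rcases ACfin3_cover c j with hc | hc | hc <;> subst hc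
    · exact le_of_eq h1
    · exact le_of_eq h2
    · exact h3
  · right
    intro c
    rcases ACfin3_cover c j with hc | hc | hc <;> subst hc
    · exact le_of_eq h1.symm
    · exact le_of_eq h2.symm
    · exact h3

/-- coordinate where x drops below m (selector) -/
def ACjsel (m : Fin 3 → ℕ) (x : Fin 3 → ℕ) : Fin 3 :=
  if x 0 < m 0 then 0 else if x 1 < m 1 then 1 else 2

lemma ACjsel_lt {m x : Fin 3 → ℕ} (hx : ¬ ∀ j, m j ≤ x j) :
    x (ACjsel m x) < m (ACjsel m x) := by
  push_neg at hx
  obtain ⟨j, hj⟩ := hx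
  unfold ACjsel
  split
  · assumption
  · split
    · assumption
    · rcases ACfin3_enum j with hj0 | hj0 | hj0 <;> subst hj0 <;> omega

/-- bound for one strip: an antichain inside the free region whose `j`-th
coordinate is constantly `v ≥ u j` has size at most `deg u - K'`. -/
lemma ACstrip {t : ℕ} (j : Fin 3) (v : ℕ) (hujv : ACsE L s (t+1) j ≤ v)
    (E : Finset (Fin 3 → ℕ)) (hE1 : ∀ x ∈ E, x ∈ ACG L s (t+1))
    (hE2 : ∀ x ∈ E, ∀ y ∈ E, x ≠ y → ¬ x ≤ y) (hE3 : ∀ x ∈ E, x j = v) :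
    E.card ≤ ACdeg (ACsE L s (t+1)) - ACK L s (t+1) := by
  classical
  set u := ACsE L s (t+1) with hu
  set D := ACdeg u with hD
  set Kp := ACK L s (t+1) with hKp
  have hm'u : ∀ c, ACm L s (t+1) c ≤ u c := fun c => min_le_right _ _
  have hwit : ∀ x ∈ E, x (j+1) < u (j+1) ∨ x (j+2) < u (j+2) := by
    intro x hx
    have hnotle : ¬ u ≤ x := ((hE1 x hx).2 (t+1) (le_refl _)).2
    rw [Pi.le_def] at hnotle
    push_neg at hnotle
    obtain ⟨c, hc⟩ := hnotle
    rcases ACfin3_cover c j with rfl | rfl | rfl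
    · exfalso
      have := hE3 x hx
      omega
    · left; exact hc
    · right; exact hc
  have hsplit2 := Finset.card_filter_add_card_filter_not
    (s := E) (p := fun x => x (j+1) < u (j+1))
  have hS1 : (E.filter (fun x => x (j+1) < u (j+1))).card ≤
      u (j+1) - ACm L s (t+1) (j+1) := by
    have hc : (E.filter (fun x => x (j+1) < u (j+1))).card ≤
        (Finset.Ico (ACm L s (t+1) (j+1)) (u (j+1))).card := by
      apply Finset.card_le_card_of_injOn (fun x => x (j+1))
      · intro x hx
        rcases Finset.mem_filter.1 hx with ⟨hxE, hxlt⟩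
        exact Finset.mem_Ico.2 ⟨(hE1 x hxE).1 _, hxlt⟩
      · intro x hx y hy hxy
        simp only [Finset.coe_filter, Set.mem_setOf_eq] at hx hy
        by_contra hne
        have hxv := hE3 x hx.1
        have hyv := hE3 y hy.1
        rcases ACtwo_eq_comparable (hxv.trans hyv.symm) hxy with hle | hle
        · exact hE2 x hx.1 y hy.1 hne hle
        · exact hE2 y hy.1 x hx.1 (Ne.symm hne) hle
    calc (E.filter (fun x => x (j+1) < u (j+1))).card
        ≤ (Finset.Ico (ACm L s (t+1) (j+1)) (u (j+1))).card := hc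
      _ = u (j+1) - ACm L s (t+1) (j+1) := Nat.card_Ico _ _
  have hS2 : (E.filter (fun x => ¬ x (j+1) < u (j+1))).card ≤
      u (j+2) - ACm L s (t+1) (j+2) := by
    have hc : (E.filter (fun x => ¬ x (j+1) < u (j+1))).card ≤
        (Finset.Ico (ACm L s (t+1) (j+2)) (u (j+2))).card := by
      apply Finset.card_le_card_of_injOn (fun x => x (j+2))
      · intro x hx
        rcases Finset.mem_filter.1 hx with ⟨hxE, hxge⟩
        rcases hwit x hxE with hw | hw
        · exact absurd hw hxge
        · exact Finset.mem_Ico.2 ⟨(hE1 x hxE).1 _, hw⟩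
      · intro x hx y hy hxy
        simp only [Finset.coe_filter, Set.mem_setOf_eq] at hx hy
        by_contra hne
        have hxv := hE3 x hx.1
        have hyv := hE3 y hy.1
        have hj3 : ∀ jj : Fin 3, jj + 2 + 1 = jj := by decide
        have hcomp : x ≤ y ∨ y ≤ x := by
          refine ACtwo_eq_comparable (j := j+2) hxy ?_
          rw [hj3 j]
          exact hxv.trans hyv.symm
        rcases hcomp with hle | hle
        · exact hE2 x hx.1 y hy.1 hne hle
        · exact hE2 y hy.1 x hx.1 (Ne.symm hne) hle
    calc (E.filter (fun x => ¬ x (j+1) < u (j+1))).card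
        ≤ (Finset.Ico (ACm L s (t+1) (j+2)) (u (j+2))).card := hc
      _ = u (j+2) - ACm L s (t+1) (j+2) := Nat.card_Ico _ _
  obtain ⟨c1, hc1'⟩ : ∃ c, (E.filter (fun x => x (j+1) < u (j+1))).card = c := ⟨_, rfl⟩
  obtain ⟨c2, hc2'⟩ : ∃ c, (E.filter (fun x => ¬ x (j+1) < u (j+1))).card = c := ⟨_, rfl⟩
  rw [hc1', hc2'] at hsplit2
  rw [hc1'] at hS1
  rw [hc2'] at hS2
  clear hc1' hc2'
  have hsum3 : (u (j+1) - ACm L s (t+1) (j+1)) + (u (j+2) - ACm L s (t+1) (j+2)) ≤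
      ∑ c, (u c - ACm L s (t+1) c) := by
    have := ACfin3_sum (fun c => u c - ACm L s (t+1) c) j
    simpa using this
  have hDK : ∑ c, (u c - ACm L s (t+1) c) = D - Kp := by
    have h0 := hm'u 0
    have h1 := hm'u 1
    have h2 := hm'u 2
    have e1 : D = u 0 + u 1 + u 2 := by
      rw [hD]; simp [ACdeg, Fin.sum_univ_three]
    have e2 : Kp = ACm L s (t+1) 0 + ACm L s (t+1) 1 + ACm L s (t+1) 2 := by
      rw [hKp]; simp [ACK, Fin.sum_univ_three]
    rw [Fin.sum_univ_three]
    omega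
  omega

/-- level-drop step: Lemma E -/
lemma ACdrop {t n : ℕ} (ht : t + 1 < L) (hB : ACBnd L s t n) :
    ACBnd L s (t+1)
      (n + (ACK L s t - ACK L s (t+1)) * (ACdeg (ACsE L s (t+1)) - ACK L s (t+1))) := by
  classical
  intro F hG hAC
  have hm' : ∀ j, ACm L s (t+1) j = min (ACm L s t j) (ACsE L s (t+1) j) := fun j => rfl
  have hm'le : ∀ j, ACm L s (t+1) j ≤ ACm L s t j := fun j => min_le_left _ _
  -- the new part, fiberwise count
  have hmem : ∀ x ∈ F.filter (fun x => ¬ ∀ j, ACm L s t j ≤ x j),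
      (⟨ACjsel (ACm L s t) x, x (ACjsel (ACm L s t) x)⟩ : (_ : Fin 3) × ℕ) ∈
        Finset.univ.sigma (fun j => Finset.Ico (ACm L s (t+1) j) (ACm L s t j)) := by
    intro x hx
    rcases Finset.mem_filter.1 hx with ⟨hxF, hxP⟩
    exact Finset.mem_sigma.2 ⟨Finset.mem_univ _,
      Finset.mem_Ico.2 ⟨(hG x hxF).1 _, ACjsel_lt hxP⟩⟩
  -- per-fiber bound
  have hfiber : ∀ p ∈ Finset.univ.sigma
        (fun j => Finset.Ico (ACm L s (t+1) j) (ACm L s t j)),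
      ((F.filter (fun x => ¬ ∀ j, ACm L s t j ≤ x j)).filter
        (fun x => (⟨ACjsel (ACm L s t) x, x (ACjsel (ACm L s t) x)⟩ : (_ : Fin 3) × ℕ) = p)).card
        ≤ ACdeg (ACsE L s (t+1)) - ACK L s (t+1) := by
    rintro ⟨j, v⟩ hp
    rcases Finset.mem_sigma.1 hp with ⟨-, hv⟩
    dsimp only at hv
    rcases Finset.mem_Ico.1 hv with ⟨hv1, hv2⟩
    have hujv : ACsE L s (t+1) j ≤ v := by
      have hmj := hm' j
      rcases min_cases (ACm L s t j) (ACsE L s (t+1) j) with ⟨hc1, hc2⟩ | ⟨hc1, hc2⟩ <;> omega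
    apply ACstrip j v hujv
    · intro x hx
      rcases Finset.mem_filter.1 hx with ⟨hxF1, -⟩
      rcases Finset.mem_filter.1 hxF1 with ⟨hxF, -⟩
      exact hG x hxF
    · intro x hx y hy hxy
      rcases Finset.mem_filter.1 hx with ⟨hxF1, -⟩
      rcases Finset.mem_filter.1 hxF1 with ⟨hxF, -⟩
      rcases Finset.mem_filter.1 hy with ⟨hyF1, -⟩
      rcases Finset.mem_filter.1 hyF1 with ⟨hyF, -⟩
      exact hAC x hxF y hyF hxy
    · intro x hx
      rcases Finset.mem_filter.1 hx with ⟨-, hxeq⟩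
      rcases Sigma.mk.inj_iff.1 hxeq with ⟨hj1, hj2⟩
      subst hj1
      exact eq_of_heq hj2
  have hTcard : (Finset.univ.sigma
      (fun j => Finset.Ico (ACm L s (t+1) j) (ACm L s t j))).card
        = ACK L s t - ACK L s (t+1) := by
    rw [Finset.card_sigma]
    have h1 : ∀ j, (Finset.Ico (ACm L s (t+1) j) (ACm L s t j)).card =
        ACm L s t j - ACm L s (t+1) j := fun j => Nat.card_Ico _ _
    have e2 : ACK L s (t+1) = ACm L s (t+1) 0 + ACm L s (t+1) 1 + ACm L s (t+1) 2 := by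
      simp [ACK, Fin.sum_univ_three]
    have e3 : ACK L s t = ACm L s t 0 + ACm L s t 1 + ACm L s t 2 := by
      simp [ACK, Fin.sum_univ_three]
    simp only [h1, Fin.sum_univ_three]
    have q0 := hm'le 0
    have q1 := hm'le 1
    have q2 := hm'le 2
    omega
  -- the new part is bounded
  have htot : (F.filter (fun x => ¬ ∀ j, ACm L s t j ≤ x j)).card ≤
      (ACK L s t - ACK L s (t+1)) * (ACdeg (ACsE L s (t+1)) - ACK L s (t+1)) := by
    calc (F.filter (fun x => ¬ ∀ j, ACm L s t j ≤ x j)).card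
        = ∑ p ∈ Finset.univ.sigma
          (fun j => Finset.Ico (ACm L s (t+1) j) (ACm L s t j)),
          ((F.filter (fun x => ¬ ∀ j, ACm L s t j ≤ x j)).filter
            (fun x => (⟨ACjsel (ACm L s t) x, x (ACjsel (ACm L s t) x)⟩ : (_ : Fin 3) × ℕ)
              = p)).card := Finset.card_eq_sum_card_fiberwise hmem
      _ ≤ ∑ _p ∈ Finset.univ.sigma
          (fun j => Finset.Ico (ACm L s (t+1) j) (ACm L s t j)),
            (ACdeg (ACsE L s (t+1)) - ACK L s (t+1)) := Finset.sum_le_sum hfiber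
      _ = (Finset.univ.sigma
          (fun j => Finset.Ico (ACm L s (t+1) j) (ACm L s t j))).card
            * (ACdeg (ACsE L s (t+1)) - ACK L s (t+1)) := by
        rw [Finset.sum_const, smul_eq_mul]
      _ = (ACK L s t - ACK L s (t+1)) * (ACdeg (ACsE L s (t+1)) - ACK L s (t+1)) := by
        rw [hTcard]
  -- the old part is bounded
  have hold : (F.filter (fun x => ∀ j, ACm L s t j ≤ x j)).card ≤ n := by
    apply hB
    · intro x hx
      rcases Finset.mem_filter.1 hx with ⟨hxF, hxP⟩
      exact ⟨hxP, fun i hi => (hG x hxF).2 i (le_trans hi (Nat.le_succ t))⟩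
    · intro x hx y hy hxy
      exact hAC x (Finset.mem_filter.1 hx).1 y (Finset.mem_filter.1 hy).1 hxy
  have hsplit := Finset.card_filter_add_card_filter_not
    (s := F) (p := fun x => ∀ j, ACm L s t j ≤ x j)
  obtain ⟨cO, hcO⟩ : ∃ c, (F.filter (fun x => ∀ j, ACm L s t j ≤ x j)).card = c := ⟨_, rfl⟩
  obtain ⟨cN, hcN⟩ : ∃ c, (F.filter (fun x => ¬ ∀ j, ACm L s t j ≤ x j)).card = c := ⟨_, rfl⟩
  rw [hcO, hcN] at hsplit
  rw [hcO] at hold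
  rw [hcN] at htot
  clear hcO hcN hfiber hmem
  omega

end ACgeo2

/-- the running budget -/
def ACb (h L : ℕ) (s : Fin L → (Fin 3 → ℕ)) : ℕ → ℕ
  | 0 => 0
  | (t+1) => if ACK L s (t+1) = ACK L s t then ACb h L s t - 1
      else ACb h L s t + (ACK L s t - ACK L s (t+1)) * (ACgam h (t+2) - ACK L s (t+1))

/-- upper bound half of the main theorem -/
lemma ACupper (h : ℕ) (hh : 1 ≤ h) (L : ℕ) (s : Fin L → (Fin 3 → ℕ))
    (hA : ∀ i j : Fin L, i ≠ j → ¬ s i ≤ s j)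
    (hdeg : ∀ i : Fin L, (∑ k, s i k) ≤ h * Nat.fib (i.val + 1)) :
    L ≤ cseq h h := by
  rcases Nat.eq_zero_or_pos L with hL0 | hLp
  · have := cseq_one_le h hh h
    omega
  have hdegE : ∀ t, t < L → ACdeg (ACsE L s t) ≤ ACgam h (t+1) := by
    intro t htL
    have he : ACsE L s t = s ⟨t, htL⟩ := dif_pos htL
    rw [he]
    exact hdeg ⟨t, htL⟩
  have hInv : ∀ t, t < L → ACBnd L s t (ACb h L s t) := by
    intro t
    induction t with
    | zero => intro _; exact ACBnd_zero
    | succ t ih =>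
      intro ht
      have hBt := ih (by omega)
      by_cases hK : ACK L s (t+1) = ACK L s t
      · have := (ACwithin hA ht hK hBt).2
        have hb : ACb h L s (t+1) = ACb h L s t - 1 := by
          show (if ACK L s (t+1) = ACK L s t then _ else _) = _
          rw [if_pos hK]
        rw [hb]
        exact this
      · have hdrop := ACdrop ht hBt
        have hb : ACb h L s (t+1) = ACb h L s t +
            (ACK L s t - ACK L s (t+1)) * (ACgam h (t+2) - ACK L s (t+1)) := by
          show (if ACK L s (t+1) = ACK L s t then _ else _) = _
          rw [if_neg hK]
        rw [hb]
        refine ACBnd_mono hdrop ?_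
        have h1 : ACdeg (ACsE L s (t+1)) ≤ ACgam h (t+2) := hdegE (t+1) ht
        have h2 : ACdeg (ACsE L s (t+1)) - ACK L s (t+1) ≤
            ACgam h (t+2) - ACK L s (t+1) := by omega
        exact Nat.add_le_add_left (Nat.mul_le_mul_left _ h2) _
  apply ACrun h hh L (fun t => ACK L s t) (fun t => ACb h L s t)
  · -- K 0 ≤ h
    have h1 : ACdeg (ACsE L s 0) ≤ ACgam h 1 := hdegE 0 hLp
    have h2 : ACK L s 0 = ACdeg (ACsE L s 0) := by
      simp [ACK, ACdeg, ACm]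
    have h3 : ACgam h 1 = h := by simp [ACgam, Nat.fib_one]
    omega
  · rfl
  · intro t ht
    by_cases hK : ACK L s (t+1) = ACK L s t
    · left
      refine ⟨hK, ?_, ?_⟩
      · show (if ACK L s (t+1) = ACK L s t then _ else _) ≤ _
        rw [if_pos hK]
      · exact (ACwithin hA ht hK (hInv t (by omega))).1
    · right
      have hle : ACK L s (t+1) ≤ ACK L s t := ACK_succ_le
      refine ⟨by omega, ?_⟩
      show (if ACK L s (t+1) = ACK L s t then _ else _) ≤ _
      rw [if_neg hK]


/-! ### Construction: lower bound -/

lemma cseq_succ_ge (h i : ℕ) : cseq h i + 1 ≤ cseq h (i+1) := by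
  have h1 : 1 ≤ Nat.fib (cseq h i + 1) := Nat.fib_pos.2 (by omega)
  have h2 : h ≤ h * Nat.fib (cseq h i + 1) := Nat.le_mul_of_pos_right h h1
  show cseq h i + 1 ≤ cseq h i + 1 + h * Nat.fib (cseq h i + 1) - (h - (i + 1))
  omega

lemma cseq_gt (h i : ℕ) : i < cseq h i := by
  induction i with
  | zero => simp [cseq]
  | succ i ih => have := cseq_succ_ge h i; omega

lemma cseq_mono (h : ℕ) {a b : ℕ} (hab : a ≤ b) : cseq h a ≤ cseq h b := by
  induction b with
  | zero => have : a = 0 := by omega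
            subst this; exact le_refl _
  | succ b ih =>
    rcases Nat.lt_or_ge a (b+1) with hlt | hge
    · have := ih (by omega)
      have := cseq_succ_ge h b
      omega
    · have : a = b + 1 := by omega
      subst this; exact le_refl _

/-- block index of position i -/
def ACt (h i : ℕ) : ℕ := Nat.find (show ∃ t, i < cseq h t from ⟨i, cseq_gt h i⟩)

lemma ACt_spec (h i : ℕ) : i < cseq h (ACt h i) :=
  Nat.find_spec (show ∃ t, i < cseq h t from ⟨i, cseq_gt h i⟩)

lemma ACt_le (h i : ℕ) {t : ℕ} (ht : i < cseq h t) : ACt h i ≤ t :=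
  Nat.find_min' _ ht

lemma ACt_pos (h i : ℕ) (hi : 1 ≤ i) : 1 ≤ ACt h i := by
  by_contra hc
  have h0 : ACt h i = 0 := by omega
  have := ACt_spec h i
  rw [h0] at this
  simp [cseq] at this
  omega

lemma ACt_lower (h i : ℕ) (hi : 1 ≤ i) : cseq h (ACt h i - 1) ≤ i := by
  have hpos := ACt_pos h i hi
  by_contra hc
  have := ACt_le h i (show i < cseq h (ACt h i - 1) by omega)
  omega

def ACvec (a b c : ℕ) : Fin 3 → ℕ := fun j => if j = 0 then a else if j = 1 then b else c

lemma ACvec_sum (a b c : ℕ) : ∑ k, ACvec a b c k = a + b + c := by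
  rw [Fin.sum_univ_three]
  simp [ACvec]

/-- the extremal antichain sequence -/
def ACs (h i : ℕ) : Fin 3 → ℕ :=
  if i = 0 then ACvec 0 0 h
  else ACvec (i - cseq h (ACt h i - 1))
    ((cseq h (ACt h i) - cseq h (ACt h i - 1) - 1) - (i - cseq h (ACt h i - 1)))
    (h - ACt h i)

/-- basic block facts -/
lemma ACell (h : ℕ) (hh : 1 ≤ h) {t : ℕ} (ht1 : 1 ≤ t) :
    h - t ≤ h * Nat.fib (cseq h (t-1) + 1) ∧
    cseq h t = cseq h (t-1) + 1 + (h * Nat.fib (cseq h (t-1) + 1) - (h - t)) := by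
  have h1 : 1 ≤ Nat.fib (cseq h (t-1) + 1) := Nat.fib_pos.2 (by omega)
  have h2 : h ≤ h * Nat.fib (cseq h (t-1) + 1) := Nat.le_mul_of_pos_right h h1
  constructor
  · omega
  · have hrec : cseq h ((t-1)+1) =
        cseq h (t-1) + 1 + h * Nat.fib (cseq h (t-1) + 1) - (h - ((t-1)+1)) := rfl
    have he : (t-1)+1 = t := by omega
    rw [he] at hrec
    omega

/-- block lengths grow strictly -/
lemma ACell_lt (h : ℕ) (hh : 1 ≤ h) {t t' : ℕ} (ht1 : 1 ≤ t) (htt : t < t') (ht'h : t' ≤ h) :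
    cseq h t - cseq h (t-1) < cseq h t' - cseq h (t'-1) := by
  obtain ⟨ha1, ha2⟩ := ACell h hh ht1
  obtain ⟨hb1, hb2⟩ := ACell h hh (show 1 ≤ t' by omega)
  have hmono : cseq h (t-1) ≤ cseq h (t'-1) := cseq_mono h (by omega)
  have hfib : h * Nat.fib (cseq h (t-1) + 1) ≤ h * Nat.fib (cseq h (t'-1) + 1) :=
    Nat.mul_le_mul_left h (Nat.fib_mono (by omega))
  omega


lemma ACvec_0 (a b c : ℕ) : ACvec a b c 0 = a := rfl
lemma ACvec_1 (a b c : ℕ) : ACvec a b c 1 = b := rfl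
lemma ACvec_2 (a b c : ℕ) : ACvec a b c 2 = c := rfl

lemma ACnot_le {x y : Fin 3 → ℕ} (c : Fin 3) (hc : y c < x c) : ¬ x ≤ y := by
  intro hle
  have h2 : x c ≤ y c := hle c
  omega

/-- bundled block facts for a position `1 ≤ i < cseq h h` -/
lemma ACblock (h : ℕ) (hh : 1 ≤ h) {i : ℕ} (hi : 1 ≤ i) (hih : i < cseq h h) :
    1 ≤ ACt h i ∧ ACt h i ≤ h ∧ cseq h (ACt h i - 1) ≤ i ∧ i < cseq h (ACt h i) ∧
    h - ACt h i ≤ h * Nat.fib (cseq h (ACt h i - 1) + 1) ∧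
    cseq h (ACt h i) = cseq h (ACt h i - 1) + 1 +
      (h * Nat.fib (cseq h (ACt h i - 1) + 1) - (h - ACt h i)) := by
  have h1 := ACt_pos h i hi
  have h2 := ACt_le h i hih
  have h3 := ACt_lower h i hi
  have h4 := ACt_spec h i
  obtain ⟨h5, h6⟩ := ACell h hh h1
  exact ⟨h1, h2, h3, h4, h5, h6⟩

lemma ACs_eq (h i : ℕ) (hi : 1 ≤ i) :
    ACs h i = ACvec (i - cseq h (ACt h i - 1))
      ((cseq h (ACt h i) - cseq h (ACt h i - 1) - 1) - (i - cseq h (ACt h i - 1)))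
      (h - ACt h i) := by
  unfold ACs
  rw [if_neg (by omega)]

/-- degree bound for the construction -/
lemma ACs_deg (h : ℕ) (hh : 1 ≤ h) {i : ℕ} (hih : i < cseq h h) :
    ∑ k, ACs h i k ≤ h * Nat.fib (i + 1) := by
  rcases Nat.eq_zero_or_pos i with hi0 | hi1
  · subst hi0
    show ∑ k, ACs h 0 k ≤ h * Nat.fib 1
    unfold ACs
    rw [if_pos rfl, ACvec_sum]
    simp [Nat.fib_one]
  · obtain ⟨h1, h2, h3, h4, h5, h6⟩ := ACblock h hh hi1 hih
    rw [ACs_eq h i hi1, ACvec_sum]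
    have hfib : h * Nat.fib (cseq h (ACt h i - 1) + 1) ≤ h * Nat.fib (i + 1) :=
      Nat.mul_le_mul_left h (Nat.fib_mono (by omega))
    omega

/-- pairwise incomparability for the construction -/
lemma ACs_incomp (h : ℕ) (hh : 1 ≤ h) {i j : ℕ} (hih : i < cseq h h)
    (hjh : j < cseq h h) (hne : i ≠ j) : ¬ ACs h i ≤ ACs h j := by
  rcases Nat.eq_zero_or_pos i with hi0 | hi1
  · -- i = 0
    subst hi0
    have hj1 : 1 ≤ j := by omega
    obtain ⟨g1, g2, g3, g4, g5, g6⟩ := ACblock h hh hj1 hjh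
    rw [ACs_eq h j hj1]
    show ¬ ACs h 0 ≤ _
    unfold ACs
    rw [if_pos rfl]
    apply ACnot_le 2
    rw [ACvec_2, ACvec_2]
    omega
  rcases Nat.eq_zero_or_pos j with hj0 | hj1
  · -- j = 0
    subst hj0
    obtain ⟨f1, f2, f3, f4, f5, f6⟩ := ACblock h hh hi1 hih
    rw [ACs_eq h i hi1]
    show ¬ _ ≤ ACs h 0
    unfold ACs
    rw [if_pos rfl]
    have hx : 1 ≤ (i - cseq h (ACt h i - 1)) +
        ((cseq h (ACt h i) - cseq h (ACt h i - 1) - 1) - (i - cseq h (ACt h i - 1))) := by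
      have hgam : h ≤ h * Nat.fib (cseq h (ACt h i - 1) + 1) :=
        Nat.le_mul_of_pos_right h (Nat.fib_pos.2 (by omega))
      omega
    rcases Nat.eq_zero_or_pos (i - cseq h (ACt h i - 1)) with hx0 | hx1
    · apply ACnot_le 1
      rw [ACvec_1, ACvec_1]
      omega
    · apply ACnot_le 0
      rw [ACvec_0, ACvec_0]
      omega
  -- both ≥ 1
  obtain ⟨f1, f2, f3, f4, f5, f6⟩ := ACblock h hh hi1 hih
  obtain ⟨g1, g2, g3, g4, g5, g6⟩ := ACblock h hh hj1 hjh
  rw [ACs_eq h i hi1, ACs_eq h j hj1]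
  rcases Nat.lt_trichotomy (ACt h i) (ACt h j) with htij | htij | htij
  · -- earlier block: bigger z
    apply ACnot_le 2
    rw [ACvec_2, ACvec_2]
    omega
  · -- same block
    have hc' : cseq h (ACt h j - 1) = cseq h (ACt h i - 1) := by rw [htij]
    have hcc : cseq h (ACt h j) = cseq h (ACt h i) := by rw [htij]
    rcases Nat.lt_trichotomy (i - cseq h (ACt h i - 1)) (j - cseq h (ACt h j - 1)) with
      hxx | hxx | hxx
    · -- x_i < x_j, so y_i > y_j
      apply ACnot_le 1
      rw [ACvec_1, ACvec_1]
      omega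
    · exfalso
      omega
    · apply ACnot_le 0
      rw [ACvec_0, ACvec_0]
      omega
  · -- later block: strictly larger slice size
    intro hle
    have hle0 : i - cseq h (ACt h i - 1) ≤ j - cseq h (ACt h j - 1) := by
      have := hle 0
      rwa [ACvec_0, ACvec_0] at this
    have hle1 : (cseq h (ACt h i) - cseq h (ACt h i - 1) - 1) - (i - cseq h (ACt h i - 1)) ≤
        (cseq h (ACt h j) - cseq h (ACt h j - 1) - 1) - (j - cseq h (ACt h j - 1)) := by
      have := hle 1
      rwa [ACvec_1, ACvec_1] at this
    have hlt := ACell_lt h hh g1 htij f2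
    omega

/-- lower bound half: the set contains `cseq h h` -/
lemma AClower (h : ℕ) (hh : 1 ≤ h) :
    ∃ s : Fin (cseq h h) → (Fin 3 → ℕ),
      (∀ i j : Fin (cseq h h), i ≠ j → ¬ s i ≤ s j) ∧
      (∀ i : Fin (cseq h h), (∑ k, s i k) ≤ h * Nat.fib (i.val + 1)) := by
  refine ⟨fun i => ACs h i.val, ?_, ?_⟩
  · intro i j hne
    exact ACs_incomp h hh i.isLt j.isLt (fun hv => hne (Fin.ext hv))
  · intro i
    exact ACs_deg h hh i.isLt


/-- The maximal length of an antichain sequence in `ℤ_{≥0}^3` (componentwise order)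
whose degree growth is bounded by `i ↦ h·Fib_i` is equal to `c_h`. -/
theorem maximal_antichain_length_dim3 (h : ℕ) (hh : 1 ≤ h) :
    IsGreatest {L : ℕ | ∃ s : Fin L → (Fin 3 → ℕ),
      (∀ i j : Fin L, i ≠ j → ¬ s i ≤ s j) ∧
      (∀ i : Fin L, (∑ k, s i k) ≤ h * Nat.fib (i.val + 1))} (cseq h h) := by
  constructor
  · exact AClower h hh
  · rintro L ⟨s, hA, hdeg⟩
    exact ACupper h hh L s hA hdeg
end

section
/- Every antichain sequence s_1, …, s_L in ℤ_{≥0}^3 with deg(s_i) ≤ Fib_i for all 1 ≤ i ≤ L satisfies L ≤ 3, and there exists such an antichain sequence of length exactly 3 (for instance (1,0,0), (0,1,0), (0,0,2)). That is, the maximal length of an antichain sequence in ℤ_{≥0}^3 with degree growth bounded by the Fibonacci sequence is 3. -/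
/-- The maximal length of an antichain sequence in `ℤ_{≥0}^3` (componentwise order)
with `deg(s_i) ≤ Fib_i` is equal to `3`. -/
theorem maximal_antichain_length_dim3_h1 :
    IsGreatest {L : ℕ | ∃ s : Fin L → (Fin 3 → ℕ),
      (∀ i j : Fin L, i ≠ j → ¬ s i ≤ s j) ∧
      (∀ i : Fin L, (∑ k, s i k) ≤ Nat.fib (i.val + 1))} 3 := by
  constructor
  · refine ⟨![![1,0,0],![0,1,0],![0,0,2]], ?_, ?_⟩
    · intro i j hij
      fin_cases i <;> fin_cases j <;>
        simp_all [Pi.le_def, Fin.forall_fin_succ]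
    · intro i
      fin_cases i <;> decide
  · rintro L ⟨s, hanti, hdeg⟩
    by_contra hL
    push_neg at hL
    have h4 : 4 ≤ L := hL
    have key : ∀ i j : Fin L, i ≠ j →
        s j 0 < s i 0 ∨ s j 1 < s i 1 ∨ s j 2 < s i 2 := by
      intro i j hij
      have h := hanti i j hij
      simp only [Pi.le_def, not_forall, not_le] at h
      obtain ⟨k, hk⟩ := h
      fin_cases k <;> tauto
    set i0 : Fin L := ⟨0, by omega⟩
    set i1 : Fin L := ⟨1, by omega⟩
    set i2 : Fin L := ⟨2, by omega⟩
    set i3 : Fin L := ⟨3, by omega⟩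
    have n01 : i0 ≠ i1 := by simp [i0, i1, Fin.ext_iff]
    have n10 : i1 ≠ i0 := by simp [i0, i1, Fin.ext_iff]
    have n02 : i0 ≠ i2 := by simp [i0, i2, Fin.ext_iff]
    have n12 : i1 ≠ i2 := by simp [i1, i2, Fin.ext_iff]
    have n03 : i0 ≠ i3 := by simp [i0, i3, Fin.ext_iff]
    have n13 : i1 ≠ i3 := by simp [i1, i3, Fin.ext_iff]
    have n23 : i2 ≠ i3 := by simp [i2, i3, Fin.ext_iff]
    have n32 : i3 ≠ i2 := by simp [i2, i3, Fin.ext_iff]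
    have k01 := key i0 i1 n01
    have k10 := key i1 i0 n10
    have k02 := key i0 i2 n02
    have k12 := key i1 i2 n12
    have k03 := key i0 i3 n03
    have k13 := key i1 i3 n13
    have k23 := key i2 i3 n23
    have k32 := key i3 i2 n32
    have d0 := hdeg i0
    have d1 := hdeg i1
    have d2 := hdeg i2
    have d3 := hdeg i3
    simp only [Fin.sum_univ_three] at d0 d1 d2 d3
    have e0 : Nat.fib (i0.val + 1) = 1 := rfl
    have e1 : Nat.fib (i1.val + 1) = 1 := rfl
    have e2 : Nat.fib (i2.val + 1) = 2 := rfl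
    have e3 : Nat.fib (i3.val + 1) = 3 := rfl
    rw [e0] at d0; rw [e1] at d1; rw [e2] at d2; rw [e3] at d3
    omega
end

section
/- The maximal length of an antichain sequence s_1, …, s_L in ℤ_{≥0}^4 with deg(s_i) ≤ Fib_i for all 1 ≤ i ≤ L is equal to 5. -/
lemma core6 (x : Fin 6 → Fin 4 → ℕ)
    (D : ∀ i j : Fin 6, i ≠ j →
      (x j 0 < x i 0 ∨ x j 1 < x i 1 ∨ x j 2 < x i 2 ∨ x j 3 < x i 3))
    (d0 : x 0 0 + x 0 1 + x 0 2 + x 0 3 ≤ 1)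
    (d1 : x 1 0 + x 1 1 + x 1 2 + x 1 3 ≤ 1)
    (d2 : x 2 0 + x 2 1 + x 2 2 + x 2 3 ≤ 2)
    (ha : x 1 0 < x 0 0) (hb : x 0 1 < x 1 1) : False := by
  have z01 : x 0 1 = 0 := by omega
  have z02 : x 0 2 = 0 := by omega
  have z03 : x 0 3 = 0 := by omega
  have z10 : x 1 0 = 0 := by omega
  have z12 : x 1 2 = 0 := by omega
  have z13 : x 1 3 = 0 := by omega
  have z20 : x 2 0 = 0 := by rcases D 0 2 (by decide) with h|h|h|h <;> omega
  have z30 : x 3 0 = 0 := by rcases D 0 3 (by decide) with h|h|h|h <;> omega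
  have z40 : x 4 0 = 0 := by rcases D 0 4 (by decide) with h|h|h|h <;> omega
  have z50 : x 5 0 = 0 := by rcases D 0 5 (by decide) with h|h|h|h <;> omega
  have z21 : x 2 1 = 0 := by rcases D 1 2 (by decide) with h|h|h|h <;> omega
  have z31 : x 3 1 = 0 := by rcases D 1 3 (by decide) with h|h|h|h <;> omega
  have z41 : x 4 1 = 0 := by rcases D 1 4 (by decide) with h|h|h|h <;> omega
  have z51 : x 5 1 = 0 := by rcases D 1 5 (by decide) with h|h|h|h <;> omega
  have B23 : x 3 2 < x 2 2 ∨ x 3 3 < x 2 3 := by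
    rcases D 2 3 (by decide) with h|h|h|h <;> omega
  have B32 : x 2 2 < x 3 2 ∨ x 2 3 < x 3 3 := by
    rcases D 3 2 (by decide) with h|h|h|h <;> omega
  have B24 : x 4 2 < x 2 2 ∨ x 4 3 < x 2 3 := by
    rcases D 2 4 (by decide) with h|h|h|h <;> omega
  have B42 : x 2 2 < x 4 2 ∨ x 2 3 < x 4 3 := by
    rcases D 4 2 (by decide) with h|h|h|h <;> omega
  have B25 : x 5 2 < x 2 2 ∨ x 5 3 < x 2 3 := by
    rcases D 2 5 (by decide) with h|h|h|h <;> omega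
  have B52 : x 2 2 < x 5 2 ∨ x 2 3 < x 5 3 := by
    rcases D 5 2 (by decide) with h|h|h|h <;> omega
  have B34 : x 4 2 < x 3 2 ∨ x 4 3 < x 3 3 := by
    rcases D 3 4 (by decide) with h|h|h|h <;> omega
  have B43 : x 3 2 < x 4 2 ∨ x 3 3 < x 4 3 := by
    rcases D 4 3 (by decide) with h|h|h|h <;> omega
  have B35 : x 5 2 < x 3 2 ∨ x 5 3 < x 3 3 := by
    rcases D 3 5 (by decide) with h|h|h|h <;> omega
  have B53 : x 3 2 < x 5 2 ∨ x 3 3 < x 5 3 := by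
    rcases D 5 3 (by decide) with h|h|h|h <;> omega
  have B45 : x 5 2 < x 4 2 ∨ x 5 3 < x 4 3 := by
    rcases D 4 5 (by decide) with h|h|h|h <;> omega
  have B54 : x 4 2 < x 5 2 ∨ x 4 3 < x 5 3 := by
    rcases D 5 4 (by decide) with h|h|h|h <;> omega
  omega

lemma no_six (t : Fin 6 → Fin 4 → ℕ)
    (hinc : ∀ i j : Fin 6, i ≠ j → ¬ t i ≤ t j)
    (hdeg : ∀ i : Fin 6, (∑ k, t i k) ≤ Nat.fib (i.val + 1)) : False := by
  have key : ∀ i j : Fin 6, i ≠ j → ∃ k, t j k < t i k := by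
    intro i j hij
    simpa [Pi.le_def, not_forall, not_le] using hinc i j hij
  obtain ⟨a, hA⟩ := key 0 1 (by decide)
  obtain ⟨b, hB⟩ := key 1 0 (by decide)
  have hab : a ≠ b := by rintro rfl; omega
  -- permutation σ with σ 0 = a, σ 1 = b
  set b' : Fin 4 := Equiv.swap 0 a b with hb'
  have hswap : Equiv.swap 0 a b' = b := by
    rw [hb']; exact Equiv.swap_apply_self 0 a b
  have hb'0 : b' ≠ 0 := by
    intro h
    apply hab
    rw [h, Equiv.swap_apply_left] at hswap
    exact hswap
  set σ : Equiv.Perm (Fin 4) := (Equiv.swap 1 b').trans (Equiv.swap 0 a) with hσ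
  have hσ0 : σ 0 = a := by
    show Equiv.swap 0 a (Equiv.swap 1 b' 0) = a
    rw [Equiv.swap_apply_of_ne_of_ne (by decide : (0:Fin 4) ≠ 1) (Ne.symm hb'0),
      Equiv.swap_apply_left]
  have hσ1 : σ 1 = b := by
    show Equiv.swap 0 a (Equiv.swap 1 b' 1) = b
    rw [Equiv.swap_apply_left]
    exact hswap
  set x : Fin 6 → Fin 4 → ℕ := fun i k => t i (σ k) with hx
  have key' : ∀ i j : Fin 6, i ≠ j → ∃ m, x j m < x i m := by
    intro i j hij
    obtain ⟨k, hk⟩ := key i j hij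
    exact ⟨σ.symm k, by simpa [hx] using hk⟩
  have D : ∀ i j : Fin 6, i ≠ j →
      (x j 0 < x i 0 ∨ x j 1 < x i 1 ∨ x j 2 < x i 2 ∨ x j 3 < x i 3) := by
    intro i j hij
    obtain ⟨k, hk⟩ := key' i j hij
    fin_cases k
    · exact Or.inl hk
    · exact Or.inr (Or.inl hk)
    · exact Or.inr (Or.inr (Or.inl hk))
    · exact Or.inr (Or.inr (Or.inr hk))
  have dx : ∀ i : Fin 6, x i 0 + x i 1 + x i 2 + x i 3 ≤ Nat.fib (i.val + 1) := by
    intro i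
    rw [← Fin.sum_univ_four]
    calc (∑ k, x i k) = ∑ k, t i k := Fintype.sum_equiv σ _ _ (fun k => rfl)
    _ ≤ _ := hdeg i
  have d0 : x 0 0 + x 0 1 + x 0 2 + x 0 3 ≤ 1 := by have := dx 0; norm_num at this; exact this
  have d1 : x 1 0 + x 1 1 + x 1 2 + x 1 3 ≤ 1 := by have := dx 1; norm_num at this; exact this
  have d2 : x 2 0 + x 2 1 + x 2 2 + x 2 3 ≤ 2 := by have := dx 2; norm_num at this; exact this
  exact core6 x D d0 d1 d2 (by simpa [hx, hσ0] using hA) (by simpa [hx, hσ1] using hB)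

/-- The maximal length of an antichain sequence in `ℤ_{≥0}^4` (componentwise order)
with `deg(s_i) ≤ Fib_i` is equal to `5`. -/
theorem maximal_antichain_length_dim4_h1 :
    IsGreatest {L : ℕ | ∃ s : Fin L → (Fin 4 → ℕ),
      (∀ i j : Fin L, i ≠ j → ¬ s i ≤ s j) ∧
      (∀ i : Fin L, (∑ k, s i k) ≤ Nat.fib (i.val + 1))} 5 := by
  constructor
  · refine ⟨![![1,0,0,0], ![0,1,0,0], ![0,0,2,0], ![0,0,1,2], ![0,0,0,3]], ?_, ?_⟩
    · simp only [Pi.le_def]; decide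
    · decide
  · rintro L ⟨s, hinc, hdeg⟩
    by_contra hL
    push_neg at hL
    have h6 : 6 ≤ L := hL
    refine no_six (fun i => s ⟨i.val, lt_of_lt_of_le i.isLt h6⟩) ?_ ?_
    · intro i j hij
      exact hinc _ _ (by simp [Fin.ext_iff]; exact fun h => hij (Fin.ext h))
    · intro i
      exact hdeg ⟨i.val, lt_of_lt_of_le i.isLt h6⟩
end

section
/- The maximal length of an antichain sequence s_1, …, s_L in ℤ_{≥0}^5 with deg(s_i) ≤ Fib_i for all 1 ≤ i ≤ L is equal to 20. -/
private lemma exlt {u v : Fin 5 → ℕ} (h : ¬ u ≤ v) : ∃ k, v k < u k := by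
  by_contra hc
  push_neg at hc
  exact h fun k => hc k

private lemma core {α : Type*} [DecidableEq α] (I : Finset α) (f g : α → ℕ) (A B lo : ℕ)
    (h1 : ∀ i ∈ I, ∀ j ∈ I, i ≠ j → f j < f i ∨ g j < g i)
    (h2 : ∀ i ∈ I, lo ≤ f i)
    (h3 : ∀ i ∈ I, f i < A ∨ g i < B) :
    I.card ≤ (A - lo) + B := by
  classical
  have hsub : I ⊆ I.filter (fun i => f i < A) ∪ I.filter (fun i => g i < B) := by
    intro i hi
    rcases h3 i hi with h | h
    · exact Finset.mem_union_left _ (Finset.mem_filter.2 ⟨hi, h⟩)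
    · exact Finset.mem_union_right _ (Finset.mem_filter.2 ⟨hi, h⟩)
  have c1 : (I.filter (fun i => f i < A)).card ≤ A - lo := by
    have h' : (I.filter (fun i => f i < A)).card ≤ (Finset.Ico lo A).card := by
      apply Finset.card_le_card_of_injOn f
      · intro i hi
        obtain ⟨hi1, hi2⟩ := Finset.mem_filter.1 hi
        exact Finset.mem_Ico.2 ⟨h2 i hi1, hi2⟩
      · intro i hi j hj hfij
        rw [Finset.mem_coe] at hi hj
        by_contra hne
        have p1 := h1 i (Finset.mem_filter.1 hi).1 j (Finset.mem_filter.1 hj).1 hne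
        have p2 := h1 j (Finset.mem_filter.1 hj).1 i (Finset.mem_filter.1 hi).1 (Ne.symm hne)
        rcases p1 with h | h <;> rcases p2 with h' | h' <;> omega
    simpa using h'
  have c2 : (I.filter (fun i => g i < B)).card ≤ B := by
    have h' : (I.filter (fun i => g i < B)).card ≤ (Finset.range B).card := by
      apply Finset.card_le_card_of_injOn g
      · intro i hi
        obtain ⟨hi1, hi2⟩ := Finset.mem_filter.1 hi
        exact Finset.mem_range.2 hi2
      · intro i hi j hj hfij
        rw [Finset.mem_coe] at hi hj
        by_contra hne
        have p1 := h1 i (Finset.mem_filter.1 hi).1 j (Finset.mem_filter.1 hj).1 hne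
        have p2 := h1 j (Finset.mem_filter.1 hj).1 i (Finset.mem_filter.1 hi).1 (Ne.symm hne)
        rcases p1 with h | h <;> rcases p2 with h' | h' <;> omega
    simpa using h'
  calc I.card ≤ (I.filter (fun i => f i < A) ∪ I.filter (fun i => g i < B)).card :=
        Finset.card_le_card hsub
    _ ≤ (I.filter (fun i => f i < A)).card + (I.filter (fun i => g i < B)).card :=
        Finset.card_union_le _ _
    _ ≤ (A - lo) + B := by omega

private lemma core_erase {α : Type*} [DecidableEq α] (I : Finset α) (f g : α → ℕ) (lo : ℕ)
    (h1 : ∀ i ∈ I, ∀ j ∈ I, i ≠ j → f j < f i ∨ g j < g i)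
    (h2 : ∀ i ∈ I, lo ≤ f i) {i0 : α} (hi0 : i0 ∈ I) :
    I.card ≤ (f i0 - lo) + g i0 + 1 := by
  have h' : (I.erase i0).card ≤ (f i0 - lo) + g i0 := by
    apply core (I.erase i0) f g (f i0) (g i0) lo
    · intro i hi j hj hij
      exact h1 i (Finset.mem_of_mem_erase hi) j (Finset.mem_of_mem_erase hj) hij
    · intro i hi; exact h2 i (Finset.mem_of_mem_erase hi)
    · intro j hj
      exact h1 i0 hi0 j (Finset.mem_of_mem_erase hj) (Ne.symm (Finset.ne_of_mem_erase hj))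
  have := Finset.card_erase_of_mem hi0
  omega

private lemma sum5 (a b c d e : Fin 5) (hab : a ≠ b) (hac : a ≠ c) (had : a ≠ d) (hae : a ≠ e)
    (hbc : b ≠ c) (hbd : b ≠ d) (hbe : b ≠ e) (hcd : c ≠ d) (hce : c ≠ e) (hde : d ≠ e)
    (hcov : ∀ k : Fin 5, k = a ∨ k = b ∨ k = c ∨ k = d ∨ k = e) (f : Fin 5 → ℕ) :
    ∑ k, f k = f a + f b + f c + f d + f e := by
  have huniv : (Finset.univ : Finset (Fin 5)) = {a, b, c, d, e} := by
    ext k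
    simpa using hcov k
  rw [huniv, Finset.sum_insert (by simp [hab, hac, had, hae]),
    Finset.sum_insert (by simp [hbc, hbd, hbe]), Finset.sum_insert (by simp [hcd, hce]),
    Finset.sum_insert (by simp [hde]), Finset.sum_singleton]
  ring

private lemma exists3 : ∀ a b c : Fin 5, a ≠ b → a ≠ c → b ≠ c →
    ∃ d e : Fin 5, d ≠ a ∧ d ≠ b ∧ d ≠ c ∧ e ≠ a ∧ e ≠ b ∧ e ≠ c ∧ d ≠ e ∧
      ∀ k : Fin 5, k = a ∨ k = b ∨ k = c ∨ k = d ∨ k = e := by decide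

private lemma unit_of (u : Fin 5 → ℕ) (h : ∑ k, u k ≤ 1) {a : Fin 5} (ha : 1 ≤ u a) :
    u a = 1 ∧ ∀ k, k ≠ a → u k = 0 := by
  have h1 : ∀ k, u k ≤ ∑ j, u j := fun k =>
    Finset.single_le_sum (fun _ _ => Nat.zero_le _) (Finset.mem_univ k)
  refine ⟨by have := h1 a; omega, ?_⟩
  intro k hk
  have hsum : u a + u k ≤ ∑ j, u j := by
    have hsub := Finset.sum_le_sum_of_subset (Finset.subset_univ ({a, k} : Finset (Fin 5))) (f := u)
    rwa [Finset.sum_pair (Ne.symm hk)] at hsub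
  omega

private lemma fib_small {n : ℕ} (h : n ≤ 6) : Nat.fib (n + 1) ≤ 13 := by
  calc Nat.fib (n + 1) ≤ Nat.fib 7 := Nat.fib_mono (by omega)
    _ = 13 := by decide

private def R : Finset (Fin 21) := Finset.univ.filter (fun i => 3 ≤ i.1)
private def S7 : Finset (Fin 21) := Finset.univ.filter (fun i => 7 ≤ i.1)
private lemma hR18 : R.card = 18 := by decide
private lemma hS14 : S7.card = 14 := by decide
private lemma mem_R {i : Fin 21} : i ∈ R ↔ 3 ≤ i.1 := by simp [R]
private lemma mem_S7 {i : Fin 21} : i ∈ S7 ↔ 7 ≤ i.1 := by simp [S7]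
private lemma h3R : (3 : Fin 21) ∈ R := by decide
private lemma fib4 : Nat.fib ((3 : Fin 21).val + 1) = 3 := by decide

private lemma caseA (s : Fin 21 → Fin 5 → ℕ)
    (hinc : ∀ i j : Fin 21, i ≠ j → ¬ s i ≤ s j)
    (hdeg : ∀ i : Fin 21, (∑ k, s i k) ≤ Nat.fib (i.val + 1))
    (a b c d e : Fin 5) (hab : a ≠ b) (hac : a ≠ c) (had : a ≠ d) (hae : a ≠ e)
    (hbc : b ≠ c) (hbd : b ≠ d) (hbe : b ≠ e) (hcd : c ≠ d) (hce : c ≠ e) (hde : d ≠ e)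
    (hcov : ∀ k : Fin 5, k = a ∨ k = b ∨ k = c ∨ k = d ∨ k = e)
    (h0 : ∀ i : Fin 21, 2 ≤ i.1 → s i a = 0 ∧ s i b = 0)
    (h2c : s 2 c = 1) (h2d : s 2 d = 0) (h2e : s 2 e = 0) : False := by
  have h2ab := h0 2 (by decide)
  have hzero : ∀ i : Fin 21, 3 ≤ i.1 → s i a = 0 ∧ s i b = 0 ∧ s i c = 0 := by
    intro i hi
    have h2i : (2 : Fin 21) ≠ i := by
      apply Fin.ne_of_val_ne
      have : (2 : Fin 21).1 = 2 := rfl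
      omega
    obtain ⟨k, hk⟩ := exlt (hinc 2 i h2i)
    obtain ⟨hia, hib⟩ := h0 i (by omega)
    rcases hcov k with rfl | rfl | rfl | rfl | rfl
    · omega
    · omega
    · exact ⟨hia, hib, by omega⟩
    · omega
    · omega
  have hpair : ∀ i ∈ R, ∀ j ∈ R, i ≠ j → s j d < s i d ∨ s j e < s i e := by
    intro i hi j hj hij
    obtain ⟨k, hk⟩ := exlt (hinc i j hij)
    have hzi := hzero i (mem_R.1 hi)
    rcases hcov k with rfl | rfl | rfl | rfl | rfl
    · omega
    · omega
    · omega
    · exact Or.inl hk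
    · exact Or.inr hk
  have hcore : R.card ≤ (s 3 d - 0) + s 3 e + 1 := core_erase R (fun i => s i d) (fun i => s i e) 0 hpair
    (fun _ _ => Nat.zero_le _) h3R
  have hd3 := hdeg 3
  rw [sum5 a b c d e hab hac had hae hbc hbd hbe hcd hce hde hcov] at hd3
  have hz3 := hzero 3 (by decide)
  have h18 := hR18
  have h4 := fib4
  omega

private lemma caseB (s : Fin 21 → Fin 5 → ℕ)
    (hinc : ∀ i j : Fin 21, i ≠ j → ¬ s i ≤ s j)
    (hdeg : ∀ i : Fin 21, (∑ k, s i k) ≤ Nat.fib (i.val + 1))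
    (a b c d e : Fin 5) (hab : a ≠ b) (hac : a ≠ c) (had : a ≠ d) (hae : a ≠ e)
    (hbc : b ≠ c) (hbd : b ≠ d) (hbe : b ≠ e) (hcd : c ≠ d) (hce : c ≠ e) (hde : d ≠ e)
    (hcov : ∀ k : Fin 5, k = a ∨ k = b ∨ k = c ∨ k = d ∨ k = e)
    (h0 : ∀ i : Fin 21, 2 ≤ i.1 → s i a = 0 ∧ s i b = 0)
    (h2c : s 2 c = 2) (h2d : s 2 d = 0) (h2e : s 2 e = 0) : False := by
  classical
  have h2ab := h0 2 (by decide)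
  have hc1 : ∀ i : Fin 21, 3 ≤ i.1 → s i c ≤ 1 ∧ s i a = 0 ∧ s i b = 0 := by
    intro i hi
    have h2i : (2 : Fin 21) ≠ i := by
      apply Fin.ne_of_val_ne
      have : (2 : Fin 21).1 = 2 := rfl
      omega
    obtain ⟨k, hk⟩ := exlt (hinc 2 i h2i)
    obtain ⟨hia, hib⟩ := h0 i (by omega)
    rcases hcov k with rfl | rfl | rfl | rfl | rfl
    · omega
    · omega
    · exact ⟨by omega, hia, hib⟩
    · omega
    · omega
  set X := R.filter (fun i => ¬ s i c = 0) with hXdef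
  set Y := R.filter (fun i => s i c = 0) with hYdef
  have hXY : Y.card + X.card = 18 := by
    rw [hXdef, hYdef, Finset.card_filter_add_card_filter_not, hR18]
  have hXmem : ∀ i ∈ X, 3 ≤ i.1 ∧ s i c = 1 := by
    intro i hi
    obtain ⟨hiR, hic⟩ := Finset.mem_filter.1 hi
    have h3i := mem_R.1 hiR
    have := (hc1 i h3i).1
    exact ⟨h3i, by omega⟩
  have hYmem : ∀ i ∈ Y, 3 ≤ i.1 ∧ s i c = 0 := by
    intro i hi
    obtain ⟨hiR, hic⟩ := Finset.mem_filter.1 hi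
    exact ⟨mem_R.1 hiR, hic⟩
  have hXpair : ∀ i ∈ X, ∀ j ∈ X, i ≠ j → s j d < s i d ∨ s j e < s i e := by
    intro i hi j hj hij
    obtain ⟨k, hk⟩ := exlt (hinc i j hij)
    obtain ⟨h3i, hic⟩ := hXmem i hi
    obtain ⟨h3j, hjc⟩ := hXmem j hj
    obtain ⟨-, hia, hib⟩ := hc1 i h3i
    rcases hcov k with rfl | rfl | rfl | rfl | rfl
    · omega
    · omega
    · omega
    · exact Or.inl hk
    · exact Or.inr hk
  have hYpair : ∀ i ∈ Y, ∀ j ∈ Y, i ≠ j → s j d < s i d ∨ s j e < s i e := by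
    intro i hi j hj hij
    obtain ⟨k, hk⟩ := exlt (hinc i j hij)
    obtain ⟨h3i, hic⟩ := hYmem i hi
    obtain ⟨-, hia, hib⟩ := hc1 i h3i
    rcases hcov k with rfl | rfl | rfl | rfl | rfl
    · omega
    · omega
    · omega
    · exact Or.inl hk
    · exact Or.inr hk
  have hsum : ∀ i : Fin 21, 3 ≤ i.1 → s i c + s i d + s i e ≤ Nat.fib (i.1 + 1) := by
    intro i hi
    have hd := hdeg i
    rw [sum5 a b c d e hab hac had hae hbc hbd hbe hcd hce hde hcov] at hd
    obtain ⟨-, hia, hib⟩ := hc1 i hi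
    omega
  have hX3 : X.card ≤ 3 := by
    by_cases h3X : (3 : Fin 21) ∈ X
    · have hcore : X.card ≤ (s 3 d - 0) + s 3 e + 1 :=
        core_erase X (fun i => s i d) (fun i => s i e) 0 hXpair (fun _ _ => Nat.zero_le _) h3X
      have hs := hsum 3 (by decide)
      have h4 := fib4
      have := (hXmem 3 h3X).2
      omega
    · have h3Y : (3 : Fin 21) ∈ Y := by
        refine Finset.mem_filter.2 ⟨h3R, ?_⟩
        by_contra hne
        exact h3X (Finset.mem_filter.2 ⟨h3R, hne⟩)
      have hcross : ∀ x ∈ X, s x d < s 3 d ∨ s x e < s 3 e := by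
        intro x hx
        have hxne : (3 : Fin 21) ≠ x := by
          intro h
          rw [← h] at hx
          exact h3X hx
        obtain ⟨k, hk⟩ := exlt (hinc 3 x hxne)
        obtain ⟨-, h3a, h3b⟩ := hc1 3 (by decide)
        have h3c := (hYmem 3 h3Y).2
        rcases hcov k with rfl | rfl | rfl | rfl | rfl
        · omega
        · omega
        · omega
        · exact Or.inl hk
        · exact Or.inr hk
      have hcore : X.card ≤ (s 3 d - 0) + s 3 e :=
        core X (fun i => s i d) (fun i => s i e) (s 3 d) (s 3 e) 0 hXpair
          (fun _ _ => Nat.zero_le _) hcross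
      have hs := hsum 3 (by decide)
      have h4 := fib4
      have := (hYmem 3 h3Y).2
      omega
  have hY15 : 15 ≤ Y.card := by omega
  have hYsub : Y ⊆ S7 := by
    intro y hy
    obtain ⟨h3y, hyc⟩ := hYmem y hy
    have hcore : Y.card ≤ (s y d - 0) + s y e + 1 :=
      core_erase Y (fun i => s i d) (fun i => s i e) 0 hYpair (fun _ _ => Nat.zero_le _) hy
    have hs := hsum y h3y
    refine mem_S7.2 ?_
    by_contra h7
    push_neg at h7
    have hfs := fib_small (n := y.1) (by omega)
    omega
  have := Finset.card_le_card hYsub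
  have := hS14
  omega

private lemma caseC (s : Fin 21 → Fin 5 → ℕ)
    (hinc : ∀ i j : Fin 21, i ≠ j → ¬ s i ≤ s j)
    (hdeg : ∀ i : Fin 21, (∑ k, s i k) ≤ Nat.fib (i.val + 1))
    (a b c d e : Fin 5) (hab : a ≠ b) (hac : a ≠ c) (had : a ≠ d) (hae : a ≠ e)
    (hbc : b ≠ c) (hbd : b ≠ d) (hbe : b ≠ e) (hcd : c ≠ d) (hce : c ≠ e) (hde : d ≠ e)
    (hcov : ∀ k : Fin 5, k = a ∨ k = b ∨ k = c ∨ k = d ∨ k = e)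
    (h0 : ∀ i : Fin 21, 2 ≤ i.1 → s i a = 0 ∧ s i b = 0)
    (h2c : s 2 c = 1) (h2d : s 2 d = 1) (h2e : s 2 e = 0) : False := by
  classical
  have h2ab := h0 2 (by decide)
  have hsplit : ∀ i : Fin 21, 3 ≤ i.1 → (s i c = 0 ∨ s i d = 0) ∧ s i a = 0 ∧ s i b = 0 := by
    intro i hi
    have h2i : (2 : Fin 21) ≠ i := by
      apply Fin.ne_of_val_ne
      have : (2 : Fin 21).1 = 2 := rfl
      omega
    obtain ⟨k, hk⟩ := exlt (hinc 2 i h2i)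
    obtain ⟨hia, hib⟩ := h0 i (by omega)
    rcases hcov k with rfl | rfl | rfl | rfl | rfl
    · omega
    · omega
    · exact ⟨Or.inl (by omega), hia, hib⟩
    · exact ⟨Or.inr (by omega), hia, hib⟩
    · omega
  set X := R.filter (fun i => ¬ s i c = 0) with hXdef
  set Y := R.filter (fun i => s i c = 0) with hYdef
  have hXY : Y.card + X.card = 18 := by
    rw [hXdef, hYdef, Finset.card_filter_add_card_filter_not, hR18]
  have hXmem : ∀ i ∈ X, 3 ≤ i.1 ∧ 1 ≤ s i c ∧ s i d = 0 := by
    intro i hi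
    obtain ⟨hiR, hic⟩ := Finset.mem_filter.1 hi
    have h3i := mem_R.1 hiR
    rcases (hsplit i h3i).1 with h | h
    · omega
    · exact ⟨h3i, by omega, h⟩
  have hYmem : ∀ i ∈ Y, 3 ≤ i.1 ∧ s i c = 0 := by
    intro i hi
    obtain ⟨hiR, hic⟩ := Finset.mem_filter.1 hi
    exact ⟨mem_R.1 hiR, hic⟩
  have hXpair : ∀ i ∈ X, ∀ j ∈ X, i ≠ j → s j c < s i c ∨ s j e < s i e := by
    intro i hi j hj hij
    obtain ⟨k, hk⟩ := exlt (hinc i j hij)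
    obtain ⟨h3i, hic, hid⟩ := hXmem i hi
    obtain ⟨-, hia, hib⟩ := hsplit i h3i
    rcases hcov k with rfl | rfl | rfl | rfl | rfl
    · omega
    · omega
    · exact Or.inl hk
    · omega
    · exact Or.inr hk
  have hYpair : ∀ i ∈ Y, ∀ j ∈ Y, i ≠ j → s j d < s i d ∨ s j e < s i e := by
    intro i hi j hj hij
    obtain ⟨k, hk⟩ := exlt (hinc i j hij)
    obtain ⟨h3i, hic⟩ := hYmem i hi
    obtain ⟨-, hia, hib⟩ := hsplit i h3i
    rcases hcov k with rfl | rfl | rfl | rfl | rfl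
    · omega
    · omega
    · omega
    · exact Or.inl hk
    · exact Or.inr hk
  have hsum : ∀ i : Fin 21, 3 ≤ i.1 → s i c + s i d + s i e ≤ Nat.fib (i.1 + 1) := by
    intro i hi
    have hd := hdeg i
    rw [sum5 a b c d e hab hac had hae hbc hbd hbe hcd hce hde hcov] at hd
    obtain ⟨-, hia, hib⟩ := hsplit i hi
    omega
  have hS7card := hS14
  have h4 := fib4
  by_cases h3X : (3 : Fin 21) ∈ X
  · -- X.card ≤ 3, so Y.card ≥ 15, contradiction with Y ⊆ S7
    obtain ⟨-, h3c, h3d⟩ := hXmem 3 h3X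
    have hcore : X.card ≤ (s 3 c - 1) + s 3 e + 1 :=
      core_erase X (fun i => s i c) (fun i => s i e) 1 hXpair
        (fun i hi => (hXmem i hi).2.1) h3X
    have hs := hsum 3 (by decide)
    have hX3 : X.card ≤ 3 := by omega
    have hY15 : 15 ≤ Y.card := by omega
    have hYsub : Y ⊆ S7 := by
      intro y hy
      obtain ⟨h3y, hyc⟩ := hYmem y hy
      have hcore : Y.card ≤ (s y d - 0) + s y e + 1 :=
        core_erase Y (fun i => s i d) (fun i => s i e) 0 hYpair (fun _ _ => Nat.zero_le _) hy
      have hs := hsum y h3y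
      refine mem_S7.2 ?_
      by_contra h7
      push_neg at h7
      have hfs := fib_small (n := y.1) (by omega)
      omega
    have := Finset.card_le_card hYsub
    omega
  · have h3Y : (3 : Fin 21) ∈ Y := by
      refine Finset.mem_filter.2 ⟨h3R, ?_⟩
      by_contra hne
      exact h3X (Finset.mem_filter.2 ⟨h3R, hne⟩)
    have h3c := (hYmem 3 h3Y).2
    have hYcore : Y.card ≤ (s 3 d - 0) + s 3 e + 1 :=
      core_erase Y (fun i => s i d) (fun i => s i e) 0 hYpair (fun _ _ => Nat.zero_le _) h3Y
    have hs3 := hsum 3 (by decide)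
    have hY4 : Y.card ≤ 4 := by omega
    have hX14 : 14 ≤ X.card := by omega
    have hXsub : X ⊆ S7 := by
      intro x hx
      obtain ⟨h3x, hxc, hxd⟩ := hXmem x hx
      have hcore : X.card ≤ (s x c - 1) + s x e + 1 :=
        core_erase X (fun i => s i c) (fun i => s i e) 1 hXpair
          (fun i hi => (hXmem i hi).2.1) hx
      have hs := hsum x h3x
      refine mem_S7.2 ?_
      by_contra h7
      push_neg at h7
      have hfs := fib_small (n := x.1) (by omega)
      omega
    have hXcard : X.card = 14 := by
      have := Finset.card_le_card hXsub
      omega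
    have hXeq : X = S7 := Finset.eq_of_subset_of_card_le hXsub (by omega)
    by_cases hyd : ∃ y ∈ Y, s y d = 0
    · obtain ⟨y0, hy0Y, hy0d⟩ := hyd
      obtain ⟨h3y0, hy0c⟩ := hYmem y0 hy0Y
      have hy0nX : y0 ∉ X := by
        intro h
        exact (Finset.mem_filter.1 h).2 hy0c
      have hy0small : y0.1 ≤ 6 := by
        by_contra h7
        push_neg at h7
        have : y0 ∈ S7 := mem_S7.2 (by omega)
        rw [← hXeq] at this
        exact hy0nX this
      have hy0e : s y0 e ≤ 13 := by
        have hs := hsum y0 h3y0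
        have hfs := fib_small (n := y0.1) (by omega)
        omega
      have hcross : ∀ x ∈ X, s x e < s y0 e ∨ s x c < 0 := by
        intro x hx
        have hne : y0 ≠ x := by
          intro h
          rw [h] at hy0nX
          exact hy0nX hx
        obtain ⟨k, hk⟩ := exlt (hinc y0 x hne)
        obtain ⟨-, hy0a, hy0b⟩ := hsplit y0 h3y0
        rcases hcov k with rfl | rfl | rfl | rfl | rfl
        · omega
        · omega
        · omega
        · omega
        · exact Or.inl hk
      have hXpair' : ∀ i ∈ X, ∀ j ∈ X, i ≠ j → s j e < s i e ∨ s j c < s i c :=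
        fun i hi j hj hij => (hXpair i hi j hj hij).symm
      have hcore : X.card ≤ (s y0 e - 0) + 0 :=
        core X (fun i => s i e) (fun i => s i c) (s y0 e) 0 0 hXpair'
          (fun _ _ => Nat.zero_le _) hcross
      omega
    · push_neg at hyd
      have hcore : Y.card ≤ (s 3 d - 1) + s 3 e + 1 :=
        core_erase Y (fun i => s i d) (fun i => s i e) 1 hYpair
          (fun y hy => Nat.one_le_iff_ne_zero.2 (hyd y hy)) h3Y
      have h3dpos : s 3 d ≠ 0 := hyd 3 h3Y
      omega

private lemma no21 (s : Fin 21 → Fin 5 → ℕ)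
    (hinc : ∀ i j : Fin 21, i ≠ j → ¬ s i ≤ s j)
    (hdeg : ∀ i : Fin 21, (∑ k, s i k) ≤ Nat.fib (i.val + 1)) : False := by
  have hne01 : (0 : Fin 21) ≠ 1 := by decide
  have hne23 : (2 : Fin 21) ≠ 3 := by decide
  -- s 0 is a unit vector e_a
  obtain ⟨a, ha⟩ := exlt (hinc 0 1 hne01)
  have hd0 : ∑ k, s 0 k ≤ 1 := by
    have := hdeg 0
    simpa using this
  obtain ⟨ha1, ha0⟩ := unit_of (s 0) hd0 (a := a) (by omega)
  -- s 1 is a unit vector e_b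
  obtain ⟨b, hb⟩ := exlt (hinc 1 0 (Ne.symm hne01))
  have hd1 : ∑ k, s 1 k ≤ 1 := by
    have := hdeg 1
    simpa using this
  obtain ⟨hb1, hb0⟩ := unit_of (s 1) hd1 (a := b) (by omega)
  have hab : a ≠ b := by
    intro h
    apply hinc 0 1 hne01
    intro k
    by_cases hk : k = a
    · rw [hk, ha1, h, hb1]
    · rw [ha0 k hk]; exact Nat.zero_le _
  -- all later elements vanish at a and b
  have h0 : ∀ i : Fin 21, 2 ≤ i.1 → s i a = 0 ∧ s i b = 0 := by
    intro i hi
    have h0i : (0 : Fin 21) ≠ i := by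
      apply Fin.ne_of_val_ne
      have : (0 : Fin 21).1 = 0 := rfl
      omega
    have h1i : (1 : Fin 21) ≠ i := by
      apply Fin.ne_of_val_ne
      have : (1 : Fin 21).1 = 1 := rfl
      omega
    constructor
    · obtain ⟨k, hk⟩ := exlt (hinc 0 i h0i)
      by_cases hka : k = a
      · subst hka; omega
      · rw [ha0 k hka] at hk; omega
    · obtain ⟨k, hk⟩ := exlt (hinc 1 i h1i)
      by_cases hkb : k = b
      · subst hkb; omega
      · rw [hb0 k hkb] at hk; omega
  obtain ⟨h2a, h2b⟩ := h0 2 (by decide)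
  -- a coordinate where s 2 is positive
  obtain ⟨c, hc⟩ := exlt (hinc 2 3 hne23)
  have hac : a ≠ c := by intro h; rw [← h] at hc; omega
  have hbc : b ≠ c := by intro h; rw [← h] at hc; omega
  obtain ⟨d, e, hda, hdb, hdc, hea, heb, hec, hde, hcov⟩ := exists3 a b c hab hac hbc
  have hd2 : s 2 a + s 2 b + s 2 c + s 2 d + s 2 e ≤ 2 := by
    have hd := hdeg 2
    rw [sum5 a b c d e hab hac hda.symm hea.symm hbc hdb.symm heb.symm hdc.symm hec.symm hde] at hd
    · have : Nat.fib ((2 : Fin 21).1 + 1) = 2 := by decide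
      omega
    · exact hcov
  by_cases hd1 : 1 ≤ s 2 d
  · exact caseC s hinc hdeg a b c d e hab hac hda.symm hea.symm hbc hdb.symm heb.symm
      hdc.symm hec.symm hde hcov h0 (by omega) (by omega) (by omega)
  · by_cases he1 : 1 ≤ s 2 e
    · exact caseC s hinc hdeg a b c e d hab hac hea.symm hda.symm hbc heb.symm hdb.symm
        hec.symm hdc.symm (Ne.symm hde)
        (fun k => by rcases hcov k with h | h | h | h | h <;> tauto) h0
        (by omega) (by omega) (by omega)
    · by_cases hc2 : s 2 c = 1
      · exact caseA s hinc hdeg a b c d e hab hac hda.symm hea.symm hbc hdb.symm heb.symm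
          hdc.symm hec.symm hde hcov h0 hc2 (by omega) (by omega)
      · exact caseB s hinc hdeg a b c d e hab hac hda.symm hea.symm hbc hdb.symm heb.symm
          hdc.symm hec.symm hde hcov h0 (by omega) (by omega) (by omega)

private def W : Fin 20 → Fin 5 → ℕ :=
  ![![1,0,0,0,0], ![0,1,0,0,0], ![0,0,2,0,0], ![0,0,1,2,0], ![0,0,1,1,1], ![0,0,1,0,2],
    ![0,0,0,13,0], ![0,0,0,12,1], ![0,0,0,11,2], ![0,0,0,10,3], ![0,0,0,9,4], ![0,0,0,8,5],
    ![0,0,0,7,6], ![0,0,0,6,7], ![0,0,0,5,8], ![0,0,0,4,9], ![0,0,0,3,10], ![0,0,0,2,11],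
    ![0,0,0,1,12], ![0,0,0,0,13]]

private lemma Wkey : ∀ i j : Fin 20, i ≠ j → ∃ k, W j k < W i k := by decide

private lemma Wdeg : ∀ i : Fin 20, (∑ k, W i k) ≤ Nat.fib (i.val + 1) := by decide

/-- The maximal length of an antichain sequence in `ℤ_{≥0}^5` (componentwise order)
with `deg(s_i) ≤ Fib_i` is equal to `20`. -/
theorem maximal_antichain_length_dim5_h1 :
    IsGreatest {L : ℕ | ∃ s : Fin L → (Fin 5 → ℕ),
      (∀ i j : Fin L, i ≠ j → ¬ s i ≤ s j) ∧
      (∀ i : Fin L, (∑ k, s i k) ≤ Nat.fib (i.val + 1))} 20 := by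
  constructor
  · refine ⟨W, fun i j hij hle => ?_, Wdeg⟩
    obtain ⟨k, hk⟩ := Wkey i j hij
    exact absurd (hle k) (Nat.not_le.2 hk)
  · intro L hL
    by_contra hgt
    push_neg at hgt
    obtain ⟨s, h1, h2⟩ := hL
    apply no21 (fun i : Fin 21 => s ⟨i.1, by omega⟩)
    · intro i j hij
      exact h1 _ _ (by simpa [Fin.ext_iff] using Fin.val_ne_of_ne hij)
    · intro i
      exact h2 ⟨i.1, by omega⟩
end
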